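/- arXiv:1906.12116 — 10 statements merged into one kernel-verified Lean document; each statement's English description precedes it below -/
import Mathlib

section
/- Fix ρ > 0 and τ > 0 with τ > ρσ. Then the function d₁ ↦ f(d₁,N₂;ρ,τ) is strictly convex on the interval [0, g(0,0,N₁;ρ)], and its unique minimizer on this interval is d₁ = g(0,0,N₁+N₂;ρ). -/
/-- `B(d,N;ρ)` with parameters `σ φ D T`. -/
noncomputable def B (σ φ D T ρ N d : ℝ) : ℝ :=
  φ * D * (1 + ρ * φ * D / T) - σ * N * d - ρ * σ ^ 2 * N * d ^ 2

/-- `g(d,N',N;ρ)` with parameters `σ φ D T`. -/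
noncomputable def g (σ φ D T ρ N' N d : ℝ) : ℝ :=
  (-1 + Real.sqrt (1 + (4 * ρ / N) * B σ φ D T ρ N' d)) / (2 * σ * ρ)

/-- `f(d₁,N₂;ρ,τ)` with parameters `σ φ D T` and `N₁`. -/
noncomputable def f (σ φ D T ρ τ N₁ N₂ d₁ : ℝ) : ℝ :=
  N₁ * d₁ + N₂ * g σ φ D T ρ N₁ N₂ d₁ +
    τ * (N₁ * d₁ ^ 2 + N₂ * (g σ φ D T ρ N₁ N₂ d₁) ^ 2)

lemma sqrt_comb (a b t s : ℝ) (ha : 0 ≤ a) (hb : 0 ≤ b) (ht : 0 ≤ t) (hs : 0 ≤ s)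
    (hts : t + s = 1) :
    t * Real.sqrt a + s * Real.sqrt b ≤ Real.sqrt (t * a + s * b) := by
  have h1 : 0 ≤ t * Real.sqrt a + s * Real.sqrt b := by positivity
  have e1 : Real.sqrt a * Real.sqrt a = a := Real.mul_self_sqrt ha
  have e2 : Real.sqrt b * Real.sqrt b = b := Real.mul_self_sqrt hb
  have h3 : 2 * (Real.sqrt a * Real.sqrt b) ≤ a + b := by
    nlinarith [sq_nonneg (Real.sqrt a - Real.sqrt b)]
  have h4 : t * s * (2 * (Real.sqrt a * Real.sqrt b)) ≤ t * s * (a + b) :=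
    mul_le_mul_of_nonneg_left h3 (mul_nonneg ht hs)
  have key : (t * Real.sqrt a + s * Real.sqrt b) ^ 2 ≤ t * a + s * b := by
    have expand : (t * Real.sqrt a + s * Real.sqrt b) ^ 2
        = t ^ 2 * a + s ^ 2 * b + t * s * (2 * (Real.sqrt a * Real.sqrt b)) := by
      ring_nf
      nlinarith [e1, e2]
    nlinarith [h4, mul_nonneg (mul_nonneg ht hs) ha, mul_nonneg (mul_nonneg ht hs) hb]
  rw [show t * Real.sqrt a + s * Real.sqrt b
      = Real.sqrt ((t * Real.sqrt a + s * Real.sqrt b) ^ 2) by rw [Real.sqrt_sq h1]]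
  exact Real.sqrt_le_sqrt key

lemma g_spec (σ φ D T ρ N' N d : ℝ) (hσ : 0 < σ) (hρ : 0 < ρ) (hN : 0 < N)
    (hB : 0 ≤ B σ φ D T ρ N' d) :
    0 ≤ g σ φ D T ρ N' N d ∧
      σ * N * g σ φ D T ρ N' N d + ρ * σ ^ 2 * N * (g σ φ D T ρ N' N d) ^ 2
        = B σ φ D T ρ N' d := by
  have harg : 0 ≤ 1 + (4 * ρ / N) * B σ φ D T ρ N' d := by positivity
  unfold g
  set s := Real.sqrt (1 + (4 * ρ / N) * B σ φ D T ρ N' d) with hsdef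
  have hs2 : s ^ 2 = 1 + (4 * ρ / N) * B σ φ D T ρ N' d := Real.sq_sqrt harg
  have hs1 : 1 ≤ s := by
    rw [hsdef]
    have h0 : 0 ≤ (4 * ρ / N) * B σ φ D T ρ N' d := by positivity
    nlinarith [Real.sq_sqrt harg, Real.sqrt_nonneg (1 + (4 * ρ / N) * B σ φ D T ρ N' d)]
  constructor
  · apply div_nonneg (by linarith) (by positivity)
  · have hBv : B σ φ D T ρ N' d = N * (s ^ 2 - 1) / (4 * ρ) := by
      field_simp [hs2]
      rw [hs2, add_sub_cancel_left, ← mul_assoc, mul_div_cancel₀ _ hN.ne']; ring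
    rw [hBv]
    field_simp
    ring

set_option maxHeartbeats 2000000 in
/-- if `τ > ρσ` then `f(·,N₂;ρ,τ)` is strictly convex on
`[0, g(0,0,N₁;ρ)]`, with unique minimizer `g(0,0,N₁+N₂;ρ)`. -/
theorem stmt_4 (σ φ D T : ℝ) (hσ : 0 < σ) (hφ : 0 < φ) (hD : 0 < D) (hT : 0 < T)
    (N₁ N₂ : ℕ) (hN₁ : 0 < N₁) (hN₂ : 0 < N₂)
    (ρ τ : ℝ) (hρ : 0 < ρ) (hτ : 0 < τ) (hτρ : ρ * σ < τ) :
    StrictConvexOn ℝ (Set.Icc 0 (g σ φ D T ρ 0 N₁ 0)) (fun d₁ => f σ φ D T ρ τ N₁ N₂ d₁) ∧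
    g σ φ D T ρ 0 ((N₁ : ℝ) + (N₂ : ℝ)) 0 ∈ Set.Icc 0 (g σ φ D T ρ 0 N₁ 0) ∧
    ∀ d₁ ∈ Set.Icc 0 (g σ φ D T ρ 0 N₁ 0), d₁ ≠ g σ φ D T ρ 0 ((N₁ : ℝ) + (N₂ : ℝ)) 0 →
      f σ φ D T ρ τ N₁ N₂ (g σ φ D T ρ 0 ((N₁ : ℝ) + (N₂ : ℝ)) 0) < f σ φ D T ρ τ N₁ N₂ d₁ := by
  have hn1 : (0:ℝ) < (N₁:ℝ) := by exact_mod_cast hN₁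
  have hn2 : (0:ℝ) < (N₂:ℝ) := by exact_mod_cast hN₂
  have hτρ' : 0 < τ - ρ * σ := by linarith
  have hcoef : 0 < σ * (τ - ρ * σ) := mul_pos hσ hτρ'
  have hρσ2 : 0 < ρ * σ ^ 2 := by positivity
  have hC : 0 < φ * D * (1 + ρ * φ * D / T) := by positivity
  have hB00 : B σ φ D T ρ 0 0 = φ * D * (1 + ρ * φ * D / T) := by simp [B]
  obtain ⟨hdmax0, hdmaxEq⟩ := g_spec σ φ D T ρ 0 (N₁:ℝ) 0 hσ hρ hn1 (by rw [hB00]; exact hC.le)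
  rw [hB00] at hdmaxEq
  obtain ⟨hdstar0, hdstarEq⟩ := g_spec σ φ D T ρ 0 ((N₁:ℝ)+(N₂:ℝ)) 0 hσ hρ (by linarith)
    (by rw [hB00]; exact hC.le)
  rw [hB00] at hdstarEq
  set dmax := g σ φ D T ρ 0 (N₁:ℝ) 0 with hdmaxdef
  set dstar := g σ φ D T ρ 0 ((N₁:ℝ) + (N₂:ℝ)) 0 with hdstardef
  clear_value dmax dstar
  -- dstar ≤ dmax
  have hdsm : dstar ≤ dmax := by
    by_contra hlt
    push_neg at hlt
    have h1 : 0 ≤ (dstar - dmax) * (dstar + dmax) :=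
      mul_nonneg (by linarith) (by linarith)
    have h2 : 0 < σ * (N₁:ℝ) * (dstar - dmax) :=
      mul_pos (mul_pos hσ hn1) (by linarith)
    have h3 : 0 ≤ ρ * σ ^ 2 * (N₁:ℝ) * ((dstar - dmax) * (dstar + dmax)) :=
      mul_nonneg (by positivity) h1
    have h4 : 0 ≤ σ * (N₂:ℝ) * dstar := by positivity
    have h5 : 0 ≤ ρ * σ ^ 2 * (N₂:ℝ) * dstar ^ 2 := by positivity
    nlinarith [hdmaxEq, hdstarEq]
  have hmem : dstar ∈ Set.Icc 0 dmax := ⟨hdstar0, hdsm⟩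
  -- B nonneg on interval
  have hBint : ∀ d ∈ Set.Icc (0:ℝ) dmax, 0 ≤ B σ φ D T ρ (N₁:ℝ) d := by
    intro d hd
    obtain ⟨hd0, hd1⟩ := hd
    have h1 : 0 ≤ (dmax - d) * (dmax + d) := mul_nonneg (by linarith) (by linarith)
    have h2 : 0 ≤ σ * (N₁:ℝ) * (dmax - d) := mul_nonneg (by positivity) (by linarith)
    have h3 : 0 ≤ ρ * σ ^ 2 * (N₁:ℝ) * ((dmax - d) * (dmax + d)) :=
      mul_nonneg (by positivity) h1
    simp only [B]
    nlinarith [hdmaxEq]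
  have key : ∀ d ∈ Set.Icc (0:ℝ) dmax, 0 ≤ g σ φ D T ρ (N₁:ℝ) (N₂:ℝ) d ∧
      σ * (N₂:ℝ) * g σ φ D T ρ (N₁:ℝ) (N₂:ℝ) d
        + ρ * σ ^ 2 * (N₂:ℝ) * (g σ φ D T ρ (N₁:ℝ) (N₂:ℝ) d) ^ 2
        = B σ φ D T ρ (N₁:ℝ) d := fun d hd =>
    g_spec σ φ D T ρ (N₁:ℝ) (N₂:ℝ) d hσ hρ hn2 (hBint d hd)
  -- constraint form
  have hcon : ∀ d ∈ Set.Icc (0:ℝ) dmax,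
      σ * ((N₁:ℝ) * d + (N₂:ℝ) * g σ φ D T ρ (N₁:ℝ) (N₂:ℝ) d)
        + ρ * σ ^ 2 * ((N₁:ℝ) * d ^ 2 + (N₂:ℝ) * (g σ φ D T ρ (N₁:ℝ) (N₂:ℝ) d) ^ 2)
        = φ * D * (1 + ρ * φ * D / T) := by
    intro d hd
    have h := (key d hd).2
    simp only [B] at h
    linear_combination h
  -- f identity
  have fid : ∀ d ∈ Set.Icc (0:ℝ) dmax,
      ρ * σ ^ 2 * f σ φ D T ρ τ (N₁:ℝ) (N₂:ℝ) d
        = τ * (φ * D * (1 + ρ * φ * D / T))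
          - σ * (τ - ρ * σ) * ((N₁:ℝ) * d + (N₂:ℝ) * g σ φ D T ρ (N₁:ℝ) (N₂:ℝ) d) := by
    intro d hd
    have h := hcon d hd
    simp only [f]
    linear_combination τ * h
  -- g at dstar equals dstar
  have hgstar : g σ φ D T ρ (N₁:ℝ) (N₂:ℝ) dstar = dstar := by
    obtain ⟨he0, heq⟩ := key dstar hmem
    simp only [B] at heq
    have hfac : (g σ φ D T ρ (N₁:ℝ) (N₂:ℝ) dstar - dstar)
        * (σ * (N₂:ℝ) + ρ * σ ^ 2 * (N₂:ℝ) * (g σ φ D T ρ (N₁:ℝ) (N₂:ℝ) dstar + dstar)) = 0 := by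
      linear_combination heq - hdstarEq
    have hpos : 0 < σ * (N₂:ℝ)
        + ρ * σ ^ 2 * (N₂:ℝ) * (g σ φ D T ρ (N₁:ℝ) (N₂:ℝ) dstar + dstar) := by
      have h6 : 0 ≤ g σ φ D T ρ (N₁:ℝ) (N₂:ℝ) dstar + dstar := by linarith
      have h7 : 0 < σ * (N₂:ℝ) := by positivity
      nlinarith [mul_nonneg (by positivity : (0:ℝ) ≤ ρ * σ ^ 2 * (N₂:ℝ)) h6]
    rcases mul_eq_zero.mp hfac with h | h
    · linarith
    · linarith
  -- S inequality
  have hS : ∀ d ∈ Set.Icc (0:ℝ) dmax, d ≠ dstar →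
      (N₁:ℝ) * d + (N₂:ℝ) * g σ φ D T ρ (N₁:ℝ) (N₂:ℝ) d < ((N₁:ℝ) + (N₂:ℝ)) * dstar := by
    intro d hd hne
    obtain ⟨he0, _⟩ := key d hd
    have hA := hcon d hd
    have hd0 : 0 ≤ d := hd.1
    rcases eq_or_ne d (g σ φ D T ρ (N₁:ℝ) (N₂:ℝ) d) with hde | hde
    · exfalso
      apply hne
      rw [← hde] at hA
      have hfac : (d - dstar)
          * (σ * ((N₁:ℝ)+(N₂:ℝ)) + ρ * σ ^ 2 * ((N₁:ℝ)+(N₂:ℝ)) * (d + dstar)) = 0 := by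
        linear_combination hA - hdstarEq
      have hpos : 0 < σ * ((N₁:ℝ)+(N₂:ℝ)) + ρ * σ ^ 2 * ((N₁:ℝ)+(N₂:ℝ)) * (d + dstar) := by
        have h6 : 0 ≤ d + dstar := by linarith
        have h7 : 0 < σ * ((N₁:ℝ)+(N₂:ℝ)) := by positivity
        nlinarith [mul_nonneg (by positivity : (0:ℝ) ≤ ρ * σ ^ 2 * ((N₁:ℝ)+(N₂:ℝ))) h6]
      rcases mul_eq_zero.mp hfac with h | h
      · linarith
      · linarith
    · by_contra hge
      push_neg at hge
      set e := g σ φ D T ρ (N₁:ℝ) (N₂:ℝ) d with hedef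
      have hde2 : 0 < (d - e) ^ 2 := by
        have h := sub_ne_zero.mpr hde
        exact lt_of_le_of_ne (sq_nonneg _) (Ne.symm (pow_ne_zero 2 h))
      have hprod : 0 ≤ σ * ((N₁:ℝ) * d + (N₂:ℝ) * e - ((N₁:ℝ)+(N₂:ℝ)) * dstar) :=
        mul_nonneg hσ.le (by linarith)
      have hQle : (N₁:ℝ) * d ^ 2 + (N₂:ℝ) * e ^ 2 ≤ ((N₁:ℝ)+(N₂:ℝ)) * dstar ^ 2 := by
        nlinarith [hprod, hA, hdstarEq, hρσ2]
      have h0 : 0 ≤ ((N₁:ℝ)+(N₂:ℝ)) * dstar := by positivity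
      have hsq := mul_self_le_mul_self h0 hge
      have hQgt : ((N₁:ℝ)+(N₂:ℝ)) * dstar ^ 2 < (N₁:ℝ) * d ^ 2 + (N₂:ℝ) * e ^ 2 := by
        nlinarith [mul_pos (mul_pos hn1 hn2) hde2, hsq]
      linarith
  refine ⟨⟨convex_Icc 0 dmax, ?_⟩, hmem, ?_⟩
  · -- strict convexity
    intro x hx y hy hxy a b ha hb hab
    simp only [smul_eq_mul]
    have hz : a * x + b * y ∈ Set.Icc (0:ℝ) dmax := (convex_Icc 0 dmax) hx hy ha.le hb.le hab
    have hBx := hBint x hx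
    have hBy := hBint y hy
    have hxy2 : 0 < (x - y) ^ 2 := by
      have h := sub_ne_zero.mpr hxy
      exact lt_of_le_of_ne (sq_nonneg _) (Ne.symm (pow_ne_zero 2 h))
    have hpx0 : 0 ≤ 1 + (4 * ρ / (N₂:ℝ)) * B σ φ D T ρ (N₁:ℝ) x := by positivity
    have hpy0 : 0 ≤ 1 + (4 * ρ / (N₂:ℝ)) * B σ φ D T ρ (N₁:ℝ) y := by positivity
    have hBmixEq : (1 + (4 * ρ / (N₂:ℝ)) * B σ φ D T ρ (N₁:ℝ) (a * x + b * y))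
        - (a * (1 + (4 * ρ / (N₂:ℝ)) * B σ φ D T ρ (N₁:ℝ) x)
           + b * (1 + (4 * ρ / (N₂:ℝ)) * B σ φ D T ρ (N₁:ℝ) y))
        = (4 * ρ / (N₂:ℝ)) * (ρ * σ ^ 2 * (N₁:ℝ)) * (a * b * (x - y) ^ 2) := by
      simp only [B]
      linear_combination (-(1 + (4 * ρ / (N₂:ℝ)) * (φ * D * (1 + ρ * φ * D / T)
        + ρ * σ ^ 2 * (N₁:ℝ) * (a * x ^ 2 + b * y ^ 2)))) * hab
    have hgap : 0 < (4 * ρ / (N₂:ℝ)) * (ρ * σ ^ 2 * (N₁:ℝ)) * (a * b * (x - y) ^ 2) := by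
      positivity
    have hmix : a * (1 + (4 * ρ / (N₂:ℝ)) * B σ φ D T ρ (N₁:ℝ) x)
        + b * (1 + (4 * ρ / (N₂:ℝ)) * B σ φ D T ρ (N₁:ℝ) y)
        < 1 + (4 * ρ / (N₂:ℝ)) * B σ φ D T ρ (N₁:ℝ) (a * x + b * y) := by linarith
    have hsq : a * Real.sqrt (1 + (4 * ρ / (N₂:ℝ)) * B σ φ D T ρ (N₁:ℝ) x)
        + b * Real.sqrt (1 + (4 * ρ / (N₂:ℝ)) * B σ φ D T ρ (N₁:ℝ) y)
        < Real.sqrt (1 + (4 * ρ / (N₂:ℝ)) * B σ φ D T ρ (N₁:ℝ) (a * x + b * y)) :=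
      calc a * Real.sqrt (1 + (4 * ρ / (N₂:ℝ)) * B σ φ D T ρ (N₁:ℝ) x)
          + b * Real.sqrt (1 + (4 * ρ / (N₂:ℝ)) * B σ φ D T ρ (N₁:ℝ) y)
          ≤ Real.sqrt (a * (1 + (4 * ρ / (N₂:ℝ)) * B σ φ D T ρ (N₁:ℝ) x)
              + b * (1 + (4 * ρ / (N₂:ℝ)) * B σ φ D T ρ (N₁:ℝ) y)) :=
            sqrt_comb _ _ a b hpx0 hpy0 ha.le hb.le hab
        _ < _ := Real.sqrt_lt_sqrt (by positivity) hmix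
    have h2σρ : (0:ℝ) < 2 * σ * ρ := by positivity
    have hgx : g σ φ D T ρ (N₁:ℝ) (N₂:ℝ) x * (2 * σ * ρ)
        = -1 + Real.sqrt (1 + (4 * ρ / (N₂:ℝ)) * B σ φ D T ρ (N₁:ℝ) x) := by
      simp only [g]; exact div_mul_cancel₀ _ (by positivity)
    have hgy : g σ φ D T ρ (N₁:ℝ) (N₂:ℝ) y * (2 * σ * ρ)
        = -1 + Real.sqrt (1 + (4 * ρ / (N₂:ℝ)) * B σ φ D T ρ (N₁:ℝ) y) := by
      simp only [g]; exact div_mul_cancel₀ _ (by positivity)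
    have hgz : g σ φ D T ρ (N₁:ℝ) (N₂:ℝ) (a * x + b * y) * (2 * σ * ρ)
        = -1 + Real.sqrt (1 + (4 * ρ / (N₂:ℝ)) * B σ φ D T ρ (N₁:ℝ) (a * x + b * y)) := by
      simp only [g]; exact div_mul_cancel₀ _ (by positivity)
    have hgcomb : a * g σ φ D T ρ (N₁:ℝ) (N₂:ℝ) x + b * g σ φ D T ρ (N₁:ℝ) (N₂:ℝ) y
        < g σ φ D T ρ (N₁:ℝ) (N₂:ℝ) (a * x + b * y) := by
      have hmul : (a * g σ φ D T ρ (N₁:ℝ) (N₂:ℝ) x + b * g σ φ D T ρ (N₁:ℝ) (N₂:ℝ) y) * (2*σ*ρ)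
          < g σ φ D T ρ (N₁:ℝ) (N₂:ℝ) (a * x + b * y) * (2*σ*ρ) := by
        have e0 : (a * g σ φ D T ρ (N₁:ℝ) (N₂:ℝ) x + b * g σ φ D T ρ (N₁:ℝ) (N₂:ℝ) y) * (2*σ*ρ)
            = a * (g σ φ D T ρ (N₁:ℝ) (N₂:ℝ) x * (2*σ*ρ))
              + b * (g σ φ D T ρ (N₁:ℝ) (N₂:ℝ) y * (2*σ*ρ)) := by ring
        rw [e0, hgx, hgy, hgz]
        nlinarith [hsq, hab]
      exact lt_of_mul_lt_mul_right hmul h2σρ.le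
    have fidx := fid x hx
    have fidy := fid y hy
    have fidz := fid (a * x + b * y) hz
    have hSlt : a * ((N₁:ℝ) * x + (N₂:ℝ) * g σ φ D T ρ (N₁:ℝ) (N₂:ℝ) x)
        + b * ((N₁:ℝ) * y + (N₂:ℝ) * g σ φ D T ρ (N₁:ℝ) (N₂:ℝ) y)
        < (N₁:ℝ) * (a * x + b * y) + (N₂:ℝ) * g σ φ D T ρ (N₁:ℝ) (N₂:ℝ) (a * x + b * y) := by
      nlinarith [mul_lt_mul_of_pos_left hgcomb hn2]
    have hmul2 : ρ * σ ^ 2 * f σ φ D T ρ τ (N₁:ℝ) (N₂:ℝ) (a * x + b * y)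
        < ρ * σ ^ 2 * (a * f σ φ D T ρ τ (N₁:ℝ) (N₂:ℝ) x
            + b * f σ φ D T ρ τ (N₁:ℝ) (N₂:ℝ) y) := by
      have hc := mul_lt_mul_of_pos_left hSlt hcoef
      have e1 : ρ * σ ^ 2 * (a * f σ φ D T ρ τ (N₁:ℝ) (N₂:ℝ) x
            + b * f σ φ D T ρ τ (N₁:ℝ) (N₂:ℝ) y)
          = τ * (φ * D * (1 + ρ * φ * D / T))
            - σ * (τ - ρ*σ) * (a * ((N₁:ℝ) * x + (N₂:ℝ) * g σ φ D T ρ (N₁:ℝ) (N₂:ℝ) x)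
              + b * ((N₁:ℝ) * y + (N₂:ℝ) * g σ φ D T ρ (N₁:ℝ) (N₂:ℝ) y)) := by
        linear_combination a * fidx + b * fidy
          + (τ * (φ * D * (1 + ρ * φ * D / T))) * hab
      linarith [fidz, hc, e1]
    exact lt_of_mul_lt_mul_left hmul2 hρσ2.le
  · -- minimizer
    intro d hd hne
    have hSd := hS d hd hne
    have fidd := fid d hd
    have fids := fid dstar hmem
    rw [hgstar] at fids
    have hlt : ρ * σ ^ 2 * f σ φ D T ρ τ (N₁:ℝ) (N₂:ℝ) dstar
        < ρ * σ ^ 2 * f σ φ D T ρ τ (N₁:ℝ) (N₂:ℝ) d := by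
      have hc := mul_lt_mul_of_pos_left hSd hcoef
      rw [fidd, fids]
      nlinarith [hc]
    exact lt_of_mul_lt_mul_left hlt hρσ2.le
end

section
/- Fix ρ > 0 and τ > 0 with τ = ρσ. Then the function d₁ ↦ f(d₁,N₂;ρ,τ) is constant on the interval [0, g(0,0,N₁;ρ)], with value (1/σ)·B(0,0;τ/σ) = (φD/σ)·(1 + (τ/σ)·φD/T). -/
/-- Key quadratic identity satisfied by `g`. -/
lemma quad (σ φ D T ρ N' N d : ℝ) (hσ : 0 < σ) (hρ : 0 < ρ) (hN : 0 < N)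
    (hB : 0 ≤ B σ φ D T ρ N' d) :
    N * (σ * g σ φ D T ρ N' N d + ρ * σ ^ 2 * (g σ φ D T ρ N' N d) ^ 2)
      = B σ φ D T ρ N' d := by
  have hc : 0 ≤ 1 + (4 * ρ / N) * B σ φ D T ρ N' d := by positivity
  have hs := Real.sq_sqrt hc
  unfold g
  generalize hsd : Real.sqrt (1 + (4 * ρ / N) * B σ φ D T ρ N' d) = s at *
  have h1 : σ ≠ 0 := ne_of_gt hσ
  have h2 : ρ ≠ 0 := ne_of_gt hρ
  have h3 : N ≠ 0 := ne_of_gt hN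
  have hs' : N * s ^ 2 = N + 4 * ρ * B σ φ D T ρ N' d := by
    field_simp at hs; linarith
  field_simp
  linear_combination hs'

/-- if `τ = ρσ` then `f(·,N₂;ρ,τ)` is constant on `[0, g(0,0,N₁;ρ)]`,
with value `(1/σ)·B(0,0;τ/σ) = (φD/σ)(1 + (τ/σ)φD/T)`. -/
theorem stmt_6 (σ φ D T : ℝ) (hσ : 0 < σ) (hφ : 0 < φ) (hD : 0 < D) (hT : 0 < T)
    (N₁ N₂ : ℕ) (hN₁ : 0 < N₁) (hN₂ : 0 < N₂)
    (ρ τ : ℝ) (hρ : 0 < ρ) (hτ : 0 < τ) (hτρ : τ = ρ * σ) :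
    (∀ d₁ ∈ Set.Icc 0 (g σ φ D T ρ 0 N₁ 0),
      f σ φ D T ρ τ N₁ N₂ d₁ = (1 / σ) * B σ φ D T (τ / σ) 0 0) ∧
    (1 / σ) * B σ φ D T (τ / σ) 0 0 = (φ * D / σ) * (1 + (τ / σ) * φ * D / T) := by
  have hN₁' : (0:ℝ) < N₁ := by exact_mod_cast hN₁
  have hN₂' : (0:ℝ) < N₂ := by exact_mod_cast hN₂
  have hτσ : τ / σ = ρ := by rw [hτρ]; field_simp
  have hB00 : 0 ≤ B σ φ D T ρ 0 0 := by
    simp only [B]; norm_num; positivity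
  -- B vanishes at the right endpoint g₀
  have hkey₀ := quad σ φ D T ρ 0 (N₁ : ℝ) 0 hσ hρ hN₁' hB00
  constructor
  · intro d₁ hd₁
    obtain ⟨hd₁0, hd₁g⟩ := hd₁
    set g₀ : ℝ := g σ φ D T ρ 0 N₁ 0 with hg₀
    have h1 : 0 ≤ g₀ - d₁ := by linarith
    have h2 : 0 ≤ g₀ + d₁ := by linarith
    have hB1 : 0 ≤ B σ φ D T ρ N₁ d₁ := by
      simp only [B] at hkey₀ ⊢
      nlinarith [mul_nonneg (mul_nonneg (mul_nonneg hρ.le (sq_nonneg σ)) hN₁'.le)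
          (mul_nonneg h1 h2),
        mul_nonneg (mul_nonneg hσ.le hN₁'.le) h1]
    have hkey := quad σ φ D T ρ (N₁ : ℝ) (N₂ : ℝ) d₁ hσ hρ hN₂' hB1
    have hσ' : σ ≠ 0 := ne_of_gt hσ
    have hmain : σ * f σ φ D T ρ τ N₁ N₂ d₁ = B σ φ D T ρ 0 0 := by
      simp only [f, hτρ]
      simp only [B] at hkey ⊢
      linear_combination hkey
    rw [hτσ]
    calc f σ φ D T ρ τ N₁ N₂ d₁ = (1 / σ) * (σ * f σ φ D T ρ τ N₁ N₂ d₁) := by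
          field_simp
      _ = (1 / σ) * B σ φ D T ρ 0 0 := by rw [hmain]
  · rw [hτσ]
    simp only [B]
    field_simp
    ring
end

section
/- Let ρ₁ > 0 and ρ₂ > 0 with ρ₁ ≠ ρ₂, and let d₁ ∈ [0, min(g(0,0,N₁;ρ₁), g(0,0,N₁;ρ₂))]. If g(d₁,N₁,N₂;ρ₁) = g(d₁,N₁,N₂;ρ₂), then, writing d₂ for this common value, σ(N₁d₁ + N₂d₂) = φD, i.e., d₁ = (φD − σN₂d₂)/(σN₁). -/
lemma B_nonneg (σ φ D T ρ : ℝ) (hσ : 0 < σ) (hφ : 0 < φ) (hD : 0 < D) (hT : 0 < T)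
    (N₁ : ℝ) (hN₁ : 0 < N₁) (hρ : 0 < ρ) (d₁ : ℝ) (h0 : 0 ≤ d₁)
    (h1 : d₁ ≤ g σ φ D T ρ 0 N₁ 0) : 0 ≤ B σ φ D T ρ N₁ d₁ := by
  have hC : 0 < B σ φ D T ρ 0 0 := by
    unfold B
    have : 0 < φ * D * (1 + ρ * φ * D / T) := by positivity
    nlinarith
  set C := B σ φ D T ρ 0 0 with hCdef
  set s := Real.sqrt (1 + 4 * ρ / N₁ * C) with hs
  have harg : (0:ℝ) ≤ 1 + 4 * ρ / N₁ * C := by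
    have : 0 < 4 * ρ / N₁ * C := by positivity
    linarith
  have hs2 : s ^ 2 = 1 + 4 * ρ / N₁ * C := Real.sq_sqrt harg
  have hg : g σ φ D T ρ 0 N₁ 0 = (-1 + s) / (2 * σ * ρ) := by
    unfold g; simp [hs, hCdef, B]
  rw [hg] at h1
  have hpos : 0 < 2 * σ * ρ := by positivity
  have h2 : 2 * σ * ρ * d₁ + 1 ≤ s := by
    rw [le_div_iff₀ hpos] at h1; nlinarith
  have h4 : (0:ℝ) ≤ 2 * σ * ρ * d₁ + 1 := by positivity
  have h3 : (2 * σ * ρ * d₁ + 1) ^ 2 ≤ s ^ 2 := by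
    exact pow_le_pow_left₀ h4 h2 2
  rw [hs2] at h3
  -- multiply out the /N₁
  have h5 : ((2 * σ * ρ * d₁ + 1) ^ 2) * N₁ ≤ (1 + 4 * ρ / N₁ * C) * N₁ :=
    mul_le_mul_of_nonneg_right h3 (le_of_lt hN₁)
  have h6 : (1 + 4 * ρ / N₁ * C) * N₁ = N₁ + 4 * ρ * C := by
    field_simp
  rw [h6] at h5
  have hBeq : B σ φ D T ρ N₁ d₁ = C - σ * N₁ * d₁ - ρ * σ ^ 2 * N₁ * d₁ ^ 2 := by
    rw [hCdef]; unfold B; ring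
  rw [hBeq]
  nlinarith [h5, hρ, mul_pos hσ hρ]

lemma key (σ φ D T ρ : ℝ) (hσ : 0 < σ) (hρ : 0 < ρ) (N₁ N₂ : ℝ) (hN₂ : 0 < N₂)
    (d₁ : ℝ) (hB : 0 ≤ B σ φ D T ρ N₁ d₁) :
    σ * N₂ * g σ φ D T ρ N₁ N₂ d₁ + ρ * σ ^ 2 * N₂ * (g σ φ D T ρ N₁ N₂ d₁) ^ 2
      = B σ φ D T ρ N₁ d₁ := by
  set Bv := B σ φ D T ρ N₁ d₁ with hBv
  set s := Real.sqrt (1 + 4 * ρ / N₂ * Bv) with hs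
  have harg : (0:ℝ) ≤ 1 + 4 * ρ / N₂ * Bv := by positivity
  have hs2 : s ^ 2 = 1 + 4 * ρ / N₂ * Bv := Real.sq_sqrt harg
  have hg : g σ φ D T ρ N₁ N₂ d₁ = (-1 + s) / (2 * σ * ρ) := rfl
  rw [hg]
  have hσ' : σ ≠ 0 := ne_of_gt hσ
  have hρ' : ρ ≠ 0 := ne_of_gt hρ
  have hN₂' : N₂ ≠ 0 := ne_of_gt hN₂
  have e1 : σ * N₂ * ((-1 + s) / (2 * σ * ρ)) + ρ * σ ^ 2 * N₂ * ((-1 + s) / (2 * σ * ρ)) ^ 2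
      = N₂ * (s ^ 2 - 1) / (4 * ρ) := by
    field_simp
    ring
  rw [e1, hs2]
  field_simp
  ring

/-- if `g(d₁,N₁,N₂;ρ₁) = g(d₁,N₁,N₂;ρ₂)` with `ρ₁ ≠ ρ₂`, then, writing `d₂` for
the common value, `σ(N₁d₁ + N₂d₂) = φD`, i.e. `d₁ = (φD − σN₂d₂)/(σN₁)`. -/
theorem stmt_7 (σ φ D T : ℝ) (hσ : 0 < σ) (hφ : 0 < φ) (hD : 0 < D) (hT : 0 < T)
    (N₁ N₂ : ℕ) (hN₁ : 0 < N₁) (hN₂ : 0 < N₂)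
    (ρ₁ ρ₂ : ℝ) (hρ₁ : 0 < ρ₁) (hρ₂ : 0 < ρ₂) (hne : ρ₁ ≠ ρ₂)
    (d₁ : ℝ) (hd₁ : d₁ ∈ Set.Icc 0 (min (g σ φ D T ρ₁ 0 N₁ 0) (g σ φ D T ρ₂ 0 N₁ 0)))
    (heq : g σ φ D T ρ₁ N₁ N₂ d₁ = g σ φ D T ρ₂ N₁ N₂ d₁) :
    σ * (N₁ * d₁ + N₂ * g σ φ D T ρ₁ N₁ N₂ d₁) = φ * D ∧
    d₁ = (φ * D - σ * N₂ * g σ φ D T ρ₁ N₁ N₂ d₁) / (σ * N₁) := by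
  obtain ⟨h0, h1⟩ := hd₁
  have hN₁r : (0:ℝ) < N₁ := by exact_mod_cast hN₁
  have hN₂r : (0:ℝ) < N₂ := by exact_mod_cast hN₂
  have hB1 := B_nonneg σ φ D T ρ₁ hσ hφ hD hT N₁ hN₁r hρ₁ d₁ h0 (le_trans h1 (min_le_left _ _))
  have hB2 := B_nonneg σ φ D T ρ₂ hσ hφ hD hT N₁ hN₁r hρ₂ d₁ h0 (le_trans h1 (min_le_right _ _))
  have k1 := key σ φ D T ρ₁ hσ hρ₁ N₁ N₂ hN₂r d₁ hB1
  have k2 := key σ φ D T ρ₂ hσ hρ₂ N₁ N₂ hN₂r d₁ hB2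
  set d₂ := g σ φ D T ρ₁ (N₁:ℝ) (N₂:ℝ) d₁ with hd₂
  rw [← heq] at k2
  simp only [B] at k1 k2
  have hTne : T ≠ 0 := ne_of_gt hT
  have hfac : (ρ₁ - ρ₂) * (σ ^ 2 * N₂ * d₂ ^ 2 + σ ^ 2 * N₁ * d₁ ^ 2 - (φ * D) ^ 2 / T) = 0 := by
    linear_combination k1 - k2
  have hz : σ ^ 2 * (N₂:ℝ) * d₂ ^ 2 + σ ^ 2 * N₁ * d₁ ^ 2 - (φ * D) ^ 2 / T = 0 :=
    (mul_eq_zero.mp hfac).resolve_left (sub_ne_zero_of_ne hne)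
  have hmain : σ * ((N₁:ℝ) * d₁ + N₂ * d₂) = φ * D := by
    linear_combination k1 - ρ₁ * hz
  refine ⟨hmain, ?_⟩
  rw [eq_div_iff (by positivity : σ * (N₁:ℝ) ≠ 0)]
  linear_combination hmain
end

section
/- Let ρ₁ > 0 and ρ₂ > 0 with ρ₁ ≠ ρ₂. The set of solutions d₁ ∈ [0, min(g(0,0,N₁;ρ₁), g(0,0,N₁;ρ₂))] of the equation g(d₁,N₁,N₂;ρ₁) = g(d₁,N₁,N₂;ρ₂) is: {r₁⁻(N₂), r₁⁺(N₂)} if N₁ + N₂ ≥ T, N₂ ≤ T and N₁ ≤ T; {r₁⁻(N₂)} if N₁ + N₂ ≥ T, N₂ ≤ T and N₁ > T; {r₁⁺(N₂)} if N₁ + N₂ ≥ T, N₂ > T and N₁ ≤ T; and the empty set in all remaining cases. -/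
set_option maxHeartbeats 1000000


/-- `r₁⁻(η)` with parameters `σ φ D T N₁`. -/
noncomputable def r₁m (σ φ D T N₁ η : ℝ) : ℝ :=
  φ * D * (1 - Real.sqrt (1 + (N₁ + η) * (η - T) / (N₁ * T))) / (σ * (N₁ + η))

/-- `r₁⁺(η)` with parameters `σ φ D T N₁`. -/
noncomputable def r₁p (σ φ D T N₁ η : ℝ) : ℝ :=
  φ * D * (1 + Real.sqrt (1 + (N₁ + η) * (η - T) / (N₁ * T))) / (σ * (N₁ + η))

lemma g_of_eq (σ φ D T ρ N' N d u : ℝ) (hσ : 0 < σ) (hρ : 0 < ρ) (hN : 0 < N)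
    (hu : 0 ≤ u) (heq : σ * N * u + ρ * σ ^ 2 * N * u ^ 2 = B σ φ D T ρ N' d) :
    g σ φ D T ρ N' N d = u := by
  have hN' : (N:ℝ) ≠ 0 := ne_of_gt hN
  have harg : 1 + (4 * ρ / N) * B σ φ D T ρ N' d = (1 + 2*σ*ρ*u)^2 := by
    field_simp
    linear_combination (-4*ρ) * heq
  unfold g
  rw [harg, Real.sqrt_sq (by positivity)]
  field_simp; ring

lemma B_mul_T (σ φ D T ρ N d : ℝ) (hT : T ≠ 0) :
    T * B σ φ D T ρ N d
      = T*(φ*D) + ρ*(φ*D)^2 - T*(σ*N*d) - T*(ρ*σ^2*N*d^2) := by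
  unfold B; field_simp

lemma delta_spec (σ φ D T ρ N₁ : ℝ) (hσ : 0 < σ) (hφ : 0 < φ) (hD : 0 < D)
    (hT : 0 < T) (hρ : 0 < ρ) (hN₁ : 0 < N₁) :
    0 ≤ g σ φ D T ρ 0 N₁ 0 ∧
      T*(σ * N₁ * g σ φ D T ρ 0 N₁ 0) + T*(ρ * σ ^ 2 * N₁ * (g σ φ D T ρ 0 N₁ 0) ^ 2)
        = T*(φ*D) + ρ*(φ*D)^2 := by
  have hB0 : B σ φ D T ρ 0 0 = φ * D * (1 + ρ * φ * D / T) := by unfold B; ring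
  obtain ⟨h0, h2⟩ := g_spec σ φ D T ρ 0 N₁ 0 hσ hρ hN₁ (by rw [hB0]; positivity)
  rw [hB0] at h2
  refine ⟨h0, ?_⟩
  have hT' : T ≠ 0 := ne_of_gt hT
  field_simp at h2
  linear_combination h2

lemma B_nonneg_of (σ φ D T ρ N₁ d δ : ℝ) (hσ : 0 < σ) (hρ : 0 < ρ) (hT : 0 < T)
    (hN₁ : 0 < N₁)
    (hδ0 : 0 ≤ δ)
    (hδeq : T*(σ * N₁ * δ) + T*(ρ * σ ^ 2 * N₁ * δ ^ 2) = T*(φ*D) + ρ*(φ*D)^2)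
    (hd0 : 0 ≤ d) (hdle : d ≤ δ) : 0 ≤ B σ φ D T ρ N₁ d := by
  have h1 : 0 ≤ T*(σ*N₁)*(δ - d) := mul_nonneg (by positivity) (by linarith)
  have h2 : 0 ≤ T*(ρ*σ^2*N₁)*(δ^2 - d^2) :=
    mul_nonneg (by positivity) (by nlinarith)
  have h3 : 0 ≤ T * B σ φ D T ρ N₁ d := by
    rw [B_mul_T σ φ D T ρ N₁ d (ne_of_gt hT)]; linarith
  by_contra h
  push_neg at h
  nlinarith [mul_pos hT (neg_pos.mpr h)]

lemma le_delta_of (σ φ D T ρ N₁ d δ : ℝ) (hσ : 0 < σ) (hρ : 0 < ρ) (hT : 0 < T)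
    (hN₁ : 0 < N₁)
    (hδ0 : 0 ≤ δ)
    (hδeq : T*(σ * N₁ * δ) + T*(ρ * σ ^ 2 * N₁ * δ ^ 2) = T*(φ*D) + ρ*(φ*D)^2)
    (hd0 : 0 ≤ d) (hBd : 0 ≤ B σ φ D T ρ N₁ d) : d ≤ δ := by
  by_contra h
  push_neg at h
  have h1 : 0 < T*(σ*N₁)*(d - δ) := mul_pos (by positivity) (by linarith)
  have h2 : 0 ≤ T*(ρ*σ^2*N₁)*(d^2 - δ^2) :=
    mul_nonneg (by positivity) (by nlinarith)
  have h3 := B_mul_T σ φ D T ρ N₁ d (ne_of_gt hT)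
  nlinarith [mul_nonneg hT.le hBd]

lemma char_lemma (σ φ D T : ℝ) (hσ : 0 < σ) (hφ : 0 < φ) (hD : 0 < D) (hT : 0 < T)
    (N₁ N₂ : ℝ) (hN₁ : (0:ℝ) < N₁) (hN₂ : (0:ℝ) < N₂)
    (ρ₁ ρ₂ : ℝ) (hρ₁ : 0 < ρ₁) (hρ₂ : 0 < ρ₂) (hne : ρ₁ ≠ ρ₂) (d : ℝ) :
    (d ∈ Set.Icc 0 (min (g σ φ D T ρ₁ 0 N₁ 0) (g σ φ D T ρ₂ 0 N₁ 0)) ∧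
        g σ φ D T ρ₁ N₁ N₂ d = g σ φ D T ρ₂ N₁ N₂ d) ↔
      (0 ≤ d ∧ σ * N₁ * d ≤ φ * D ∧
        T * σ ^ 2 * N₁ * (N₁ + N₂) * d ^ 2 - 2 * T * σ * φ * D * N₁ * d
          + φ ^ 2 * D ^ 2 * (T - N₂) = 0) := by
  have hT' : T ≠ 0 := ne_of_gt hT
  have hN₂' : N₂ ≠ 0 := ne_of_gt hN₂
  have hσ' : σ ≠ 0 := ne_of_gt hσ
  obtain ⟨hδ₁0, hδ₁⟩ := delta_spec σ φ D T ρ₁ N₁ hσ hφ hD hT hρ₁ hN₁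
  obtain ⟨hδ₂0, hδ₂⟩ := delta_spec σ φ D T ρ₂ N₁ hσ hφ hD hT hρ₂ hN₁
  constructor
  · rintro ⟨⟨hd0, hdm⟩, hg⟩
    have hd1 : d ≤ g σ φ D T ρ₁ 0 N₁ 0 := le_trans hdm (min_le_left _ _)
    have hd2 : d ≤ g σ φ D T ρ₂ 0 N₁ 0 := le_trans hdm (min_le_right _ _)
    have hB1 : 0 ≤ B σ φ D T ρ₁ N₁ d :=
      B_nonneg_of σ φ D T ρ₁ N₁ d _ hσ hρ₁ hT hN₁ hδ₁0 hδ₁ hd0 hd1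
    have hB2 : 0 ≤ B σ φ D T ρ₂ N₁ d :=
      B_nonneg_of σ φ D T ρ₂ N₁ d _ hσ hρ₂ hT hN₁ hδ₂0 hδ₂ hd0 hd2
    obtain ⟨hu0, eq1⟩ := g_spec σ φ D T ρ₁ N₁ N₂ d hσ hρ₁ hN₂ hB1
    obtain ⟨_, eq2⟩ := g_spec σ φ D T ρ₂ N₁ N₂ d hσ hρ₂ hN₂ hB2
    set u := g σ φ D T ρ₁ N₁ N₂ d with hu
    rw [← hg] at eq2
    have Eq1 : T*(σ*N₂*u) + T*(ρ₁*σ^2*N₂*u^2)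
        = T*(φ*D) + ρ₁*(φ*D)^2 - T*(σ*N₁*d) - T*(ρ₁*σ^2*N₁*d^2) := by
      rw [← B_mul_T σ φ D T ρ₁ N₁ d hT']
      linear_combination T * eq1
    have Eq2 : T*(σ*N₂*u) + T*(ρ₂*σ^2*N₂*u^2)
        = T*(φ*D) + ρ₂*(φ*D)^2 - T*(σ*N₁*d) - T*(ρ₂*σ^2*N₁*d^2) := by
      rw [← B_mul_T σ φ D T ρ₂ N₁ d hT']
      linear_combination T * eq2
    have h1 : (ρ₁ - ρ₂) * (T * (σ ^ 2 * N₂ * u ^ 2))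
        = (ρ₁ - ρ₂) * ((φ*D)^2 - T * (σ ^ 2 * N₁ * d ^ 2)) := by
      linear_combination Eq1 - Eq2
    have key1 : T * (σ ^ 2 * N₂ * u ^ 2) = (φ*D)^2 - T * (σ ^ 2 * N₁ * d ^ 2) :=
      mul_left_cancel₀ (sub_ne_zero.mpr hne) h1
    have key2T : T * (σ * N₂ * u) = T * (φ * D - σ * N₁ * d) := by
      linear_combination Eq1 - ρ₁ * key1
    have key2 : σ * N₂ * u = φ * D - σ * N₁ * d := mul_left_cancel₀ hT' key2T
    refine ⟨hd0, by nlinarith [mul_nonneg (mul_nonneg hσ.le hN₂.le) hu0], ?_⟩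
    linear_combination N₂ * key1 - (T * (σ * N₂ * u + φ * D - σ * N₁ * d)) * key2
  · rintro ⟨hd0, hdle, hq⟩
    set u := (φ * D - σ * N₁ * d) / (σ * N₂) with hudef
    have hu0 : 0 ≤ u := div_nonneg (by linarith) (by positivity)
    have hs : σ * N₂ * u = φ * D - σ * N₁ * d := by
      rw [hudef]; field_simp
    have hs2 : σ ^ 2 * N₂ * u ^ 2 = (φ * D - σ * N₁ * d) ^ 2 / N₂ := by
      rw [hudef]; field_simp
    have hq' : (φ * D - σ * N₁ * d) ^ 2 * T = N₂ * ((φ*D)^2 - T * (σ^2 * N₁ * d^2)) := by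
      linear_combination hq
    have hueq : ∀ ρ : ℝ, σ * N₂ * u + ρ * σ ^ 2 * N₂ * u ^ 2 = B σ φ D T ρ N₁ d := by
      intro ρ
      rw [hs, show ρ * σ ^ 2 * N₂ * u ^ 2 = ρ * (σ ^ 2 * N₂ * u ^ 2) from by ring,
        hs2]
      unfold B
      field_simp
      linear_combination ρ * hq'
    have hBpos : ∀ ρ : ℝ, 0 < ρ → 0 ≤ B σ φ D T ρ N₁ d := by
      intro ρ hρ
      rw [← hueq ρ]
      positivity
    have hg1 : g σ φ D T ρ₁ N₁ N₂ d = u :=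
      g_of_eq σ φ D T ρ₁ N₁ N₂ d u hσ hρ₁ hN₂ hu0 (hueq ρ₁)
    have hg2 : g σ φ D T ρ₂ N₁ N₂ d = u :=
      g_of_eq σ φ D T ρ₂ N₁ N₂ d u hσ hρ₂ hN₂ hu0 (hueq ρ₂)
    have hle1 : d ≤ g σ φ D T ρ₁ 0 N₁ 0 :=
      le_delta_of σ φ D T ρ₁ N₁ d _ hσ hρ₁ hT hN₁ hδ₁0 hδ₁ hd0 (hBpos ρ₁ hρ₁)
    have hle2 : d ≤ g σ φ D T ρ₂ 0 N₁ 0 :=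
      le_delta_of σ φ D T ρ₂ N₁ d _ hσ hρ₂ hT hN₁ hδ₂0 hδ₂ hd0 (hBpos ρ₂ hρ₂)
    exact ⟨⟨hd0, le_min hle1 hle2⟩, by rw [hg1, hg2]⟩

lemma master (σ φ D T n₁ n₂ : ℝ) (hσ : 0 < σ) (hφ : 0 < φ) (hD : 0 < D) (hT : 0 < T)
    (hn1 : 0 < n₁) (hn2 : 0 < n₂) (h12 : T ≤ n₁ + n₂) (d : ℝ) :
    (0 ≤ d ∧ σ * n₁ * d ≤ φ * D ∧
        T * σ ^ 2 * n₁ * (n₁ + n₂) * d ^ 2 - 2 * T * σ * φ * D * n₁ * d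
          + φ ^ 2 * D ^ 2 * (T - n₂) = 0)
      ↔ ((n₂ ≤ T ∧ d = r₁m σ φ D T n₁ n₂) ∨ (n₁ ≤ T ∧ d = r₁p σ φ D T n₁ n₂)) := by
  have hn1' : n₁ ≠ 0 := hn1.ne'
  have hT' : T ≠ 0 := hT.ne'
  have hσ' : σ ≠ 0 := hσ.ne'
  have h12' : (0:ℝ) < n₁ + n₂ := by linarith
  set s := Real.sqrt (1 + (n₁ + n₂) * (n₂ - T) / (n₁ * T)) with hsdef
  have hs0 : 0 ≤ s := Real.sqrt_nonneg _
  have harg : 0 ≤ 1 + (n₁ + n₂) * (n₂ - T) / (n₁ * T) := by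
    have he : 1 + (n₁ + n₂) * (n₂ - T) / (n₁ * T) = n₂ * ((n₁ + n₂) - T) / (n₁ * T) := by
      field_simp; ring
    rw [he]
    exact div_nonneg (mul_nonneg hn2.le (by linarith)) (by positivity)
  have hs2 : s ^ 2 = 1 + (n₁ + n₂) * (n₂ - T) / (n₁ * T) := Real.sq_sqrt harg
  have hs2' : n₁ * T * s ^ 2 = n₂ * ((n₁ + n₂) - T) := by
    rw [hs2]; field_simp; ring
  have hrm : r₁m σ φ D T n₁ n₂ = φ * D * (1 - s) / (σ * (n₁ + n₂)) := rfl
  have hrp : r₁p σ φ D T n₁ n₂ = φ * D * (1 + s) / (σ * (n₁ + n₂)) := rfl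
  have hfact : ∀ d : ℝ,
      T * σ ^ 2 * n₁ * (n₁ + n₂) * d ^ 2 - 2 * T * σ * φ * D * n₁ * d
          + φ ^ 2 * D ^ 2 * (T - n₂)
        = T * σ ^ 2 * n₁ * (n₁ + n₂) * (d - φ * D * (1 - s) / (σ * (n₁ + n₂)))
            * (d - φ * D * (1 + s) / (σ * (n₁ + n₂))) := by
    intro d
    field_simp
    linear_combination (φ ^ 2 * D ^ 2) * hs2'
  have hs1_of : n₂ ≤ T → s ≤ 1 := by
    intro hA
    have h1 : n₁ * T * s ^ 2 ≤ n₁ * T * 1 := by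
      rw [hs2']
      nlinarith [mul_nonneg h12'.le (sub_nonneg.mpr hA)]
    have h2 : s ^ 2 ≤ 1 :=
      le_of_mul_le_mul_left (by linarith) (by positivity : (0:ℝ) < n₁ * T)
    nlinarith [sq_nonneg (s - 1), h2, hs0]
  have hrm0 : n₂ ≤ T → 0 ≤ φ * D * (1 - s) / (σ * (n₁ + n₂)) := by
    intro hA
    have hs1 : s ≤ 1 := hs1_of hA
    exact div_nonneg (mul_nonneg (by positivity) (by linarith)) (by positivity)
  have hrmle : σ * n₁ * (φ * D * (1 - s) / (σ * (n₁ + n₂))) ≤ φ * D := by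
    have h1 : n₁ * (1 - s) / (n₁ + n₂) ≤ 1 := by
      rw [div_le_one (by positivity)]
      nlinarith [mul_nonneg hn1.le hs0]
    calc σ * n₁ * (φ * D * (1 - s) / (σ * (n₁ + n₂)))
        = φ * D * (n₁ * (1 - s) / (n₁ + n₂)) := by field_simp
      _ ≤ φ * D * 1 := mul_le_mul_of_nonneg_left h1 (by positivity)
      _ = φ * D := mul_one _
  have hrp0 : 0 ≤ φ * D * (1 + s) / (σ * (n₁ + n₂)) :=
    div_nonneg (mul_nonneg (by positivity) (by linarith)) (by positivity)
  have hrple : n₁ ≤ T → σ * n₁ * (φ * D * (1 + s) / (σ * (n₁ + n₂))) ≤ φ * D := by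
    intro hB
    have e1 : 0 ≤ T * (n₁ * s - n₂) ^ 2 := by positivity
    have e2 : n₁ * (n₁ * T * s ^ 2) = n₁ * (n₂ * (n₁ + n₂ - T)) := by rw [hs2']
    have hns : n₁ * s ≤ n₂ := by
      nlinarith [e1, e2, mul_nonneg h12'.le (sub_nonneg.mpr hB), mul_pos hT hn2]
    have h1 : n₁ * (1 + s) / (n₁ + n₂) ≤ 1 := by
      rw [div_le_one (by positivity)]
      linarith
    calc σ * n₁ * (φ * D * (1 + s) / (σ * (n₁ + n₂)))
        = φ * D * (n₁ * (1 + s) / (n₁ + n₂)) := by field_simp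
      _ ≤ φ * D * 1 := mul_le_mul_of_nonneg_left h1 (by positivity)
      _ = φ * D := mul_one _
  have hrp_excl : T < n₁ → ¬ (σ * n₁ * (φ * D * (1 + s) / (σ * (n₁ + n₂))) ≤ φ * D) := by
    intro hB h
    have h1 : φ * D * (n₁ * (1 + s) / (n₁ + n₂)) ≤ φ * D * 1 := by
      calc φ * D * (n₁ * (1 + s) / (n₁ + n₂))
          = σ * n₁ * (φ * D * (1 + s) / (σ * (n₁ + n₂))) := by field_simp
        _ ≤ φ * D := h
        _ = φ * D * 1 := (mul_one _).symm
    have h2 : n₁ * (1 + s) / (n₁ + n₂) ≤ 1 :=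
      le_of_mul_le_mul_left h1 (by positivity : (0:ℝ) < φ * D)
    rw [div_le_one (by positivity)] at h2
    have hns : n₁ * s ≤ n₂ := by linarith
    have hsq : (n₁ * s) ^ 2 ≤ n₂ ^ 2 := by
      nlinarith [mul_nonneg hn1.le hs0]
    have a1 : T * (n₁ * s) ^ 2 ≤ T * n₂ ^ 2 := mul_le_mul_of_nonneg_left hsq hT.le
    have a2 : T * (n₁ * s) ^ 2 = n₁ * (n₂ * (n₁ + n₂ - T)) := by
      linear_combination n₁ * hs2'
    have a3 : 0 < n₂ * ((n₁ + n₂) * (n₁ - T)) :=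
      mul_pos hn2 (mul_pos h12' (sub_pos.mpr hB))
    nlinarith [a1, a2, a3]
  have hrm_excl : T < n₂ → ¬ (0 ≤ φ * D * (1 - s) / (σ * (n₁ + n₂))) := by
    intro hA h
    have h1 : 0 ≤ 1 - s := by
      by_contra hc
      push_neg at hc
      have : φ * D * (1 - s) / (σ * (n₁ + n₂)) < 0 :=
        div_neg_of_neg_of_pos (mul_neg_of_pos_of_neg (by positivity) (by linarith))
          (by positivity)
      linarith
    have h2 : s ^ 2 ≤ 1 := by nlinarith [h1, hs0]
    have h3 : n₁ * T * s ^ 2 ≤ n₁ * T := by nlinarith [mul_pos hn1 hT, h2]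
    nlinarith [h3, hs2', mul_pos hn1 (sub_pos.mpr hA), mul_pos hn2 (sub_pos.mpr hA)]
  rw [hrm, hrp]
  constructor
  · rintro ⟨hd0, hdle, hq⟩
    rw [hfact d] at hq
    have hK : (0:ℝ) < T * σ ^ 2 * n₁ * (n₁ + n₂) := by positivity
    rcases mul_eq_zero.mp hq with h | h
    · rcases mul_eq_zero.mp h with h' | h'
      · exact absurd h' hK.ne'
      · left
        have hd : d = φ * D * (1 - s) / (σ * (n₁ + n₂)) := by linarith [sub_eq_zero.mp h']
        refine ⟨?_, hd⟩
        by_contra hc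
        push_neg at hc
        exact hrm_excl hc (hd ▸ hd0)
    · right
      have hd : d = φ * D * (1 + s) / (σ * (n₁ + n₂)) := by linarith [sub_eq_zero.mp h]
      refine ⟨?_, hd⟩
      by_contra hc
      push_neg at hc
      exact hrp_excl hc (hd ▸ hdle)
  · rintro (⟨hA, rfl⟩ | ⟨hB, rfl⟩)
    · refine ⟨hrm0 hA, hrmle, ?_⟩
      rw [hfact]
      ring
    · refine ⟨hrp0, hrple hB, ?_⟩
      rw [hfact]
      ring

lemma no_roots (σ φ D T n₁ n₂ : ℝ) (hσ : 0 < σ) (hφ : 0 < φ) (hD : 0 < D) (hT : 0 < T)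
    (hn1 : 0 < n₁) (hn2 : 0 < n₂) (h12 : n₁ + n₂ < T) (d : ℝ) :
    ¬ (T * σ ^ 2 * n₁ * (n₁ + n₂) * d ^ 2 - 2 * T * σ * φ * D * n₁ * d
        + φ ^ 2 * D ^ 2 * (T - n₂) = 0) := by
  intro hq
  have h12' : (0:ℝ) < n₁ + n₂ := by linarith
  have hq' : T * n₁ * (σ * (n₁ + n₂) * d - φ * D) ^ 2
      + φ ^ 2 * D ^ 2 * n₂ * (T - (n₁ + n₂)) = 0 := by
    linear_combination (n₁ + n₂) * hq
  have h1 : 0 ≤ T * n₁ * (σ * (n₁ + n₂) * d - φ * D) ^ 2 := by positivity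
  have h2 : 0 < φ ^ 2 * D ^ 2 * n₂ * (T - (n₁ + n₂)) := by
    apply mul_pos (by positivity)
    linarith
  linarith

/-- classification of the solutions `d₁ ∈ [0, min(g(0,0,N₁;ρ₁), g(0,0,N₁;ρ₂))]`
of `g(d₁,N₁,N₂;ρ₁) = g(d₁,N₁,N₂;ρ₂)` for `ρ₁ ≠ ρ₂`. -/
theorem stmt_8 (σ φ D T : ℝ) (hσ : 0 < σ) (hφ : 0 < φ) (hD : 0 < D) (hT : 0 < T)
    (N₁ N₂ : ℕ) (hN₁ : 0 < N₁) (hN₂ : 0 < N₂)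
    (ρ₁ ρ₂ : ℝ) (hρ₁ : 0 < ρ₁) (hρ₂ : 0 < ρ₂) (hne : ρ₁ ≠ ρ₂) :
    (T ≤ (N₁ : ℝ) + N₂ → (N₂ : ℝ) ≤ T → (N₁ : ℝ) ≤ T →
      {d₁ : ℝ | d₁ ∈ Set.Icc 0 (min (g σ φ D T ρ₁ 0 N₁ 0) (g σ φ D T ρ₂ 0 N₁ 0)) ∧
          g σ φ D T ρ₁ N₁ N₂ d₁ = g σ φ D T ρ₂ N₁ N₂ d₁} =
        {r₁m σ φ D T N₁ N₂, r₁p σ φ D T N₁ N₂}) ∧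
    (T ≤ (N₁ : ℝ) + N₂ → (N₂ : ℝ) ≤ T → T < (N₁ : ℝ) →
      {d₁ : ℝ | d₁ ∈ Set.Icc 0 (min (g σ φ D T ρ₁ 0 N₁ 0) (g σ φ D T ρ₂ 0 N₁ 0)) ∧
          g σ φ D T ρ₁ N₁ N₂ d₁ = g σ φ D T ρ₂ N₁ N₂ d₁} =
        {r₁m σ φ D T N₁ N₂}) ∧
    (T ≤ (N₁ : ℝ) + N₂ → T < (N₂ : ℝ) → (N₁ : ℝ) ≤ T →
      {d₁ : ℝ | d₁ ∈ Set.Icc 0 (min (g σ φ D T ρ₁ 0 N₁ 0) (g σ φ D T ρ₂ 0 N₁ 0)) ∧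
          g σ φ D T ρ₁ N₁ N₂ d₁ = g σ φ D T ρ₂ N₁ N₂ d₁} =
        {r₁p σ φ D T N₁ N₂}) ∧
    (¬(T ≤ (N₁ : ℝ) + N₂ ∧ (N₂ : ℝ) ≤ T ∧ (N₁ : ℝ) ≤ T) →
     ¬(T ≤ (N₁ : ℝ) + N₂ ∧ (N₂ : ℝ) ≤ T ∧ T < (N₁ : ℝ)) →
     ¬(T ≤ (N₁ : ℝ) + N₂ ∧ T < (N₂ : ℝ) ∧ (N₁ : ℝ) ≤ T) →
      {d₁ : ℝ | d₁ ∈ Set.Icc 0 (min (g σ φ D T ρ₁ 0 N₁ 0) (g σ φ D T ρ₂ 0 N₁ 0)) ∧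
          g σ φ D T ρ₁ N₁ N₂ d₁ = g σ φ D T ρ₂ N₁ N₂ d₁} =
        (∅ : Set ℝ)) := by
  
  have hn1 : (0:ℝ) < (N₁:ℝ) := by exact_mod_cast hN₁
  have hn2 : (0:ℝ) < (N₂:ℝ) := by exact_mod_cast hN₂
  have hchar := char_lemma σ φ D T hσ hφ hD hT (N₁:ℝ) (N₂:ℝ) hn1 hn2 ρ₁ ρ₂ hρ₁ hρ₂ hne
  refine ⟨?_, ?_, ?_, ?_⟩
  · intro h12 hA hB
    ext d
    simp only [Set.mem_setOf_eq, Set.mem_insert_iff, Set.mem_singleton_iff]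
    rw [hchar d, master σ φ D T (N₁:ℝ) (N₂:ℝ) hσ hφ hD hT hn1 hn2 h12 d]
    constructor
    · rintro (⟨_, h⟩ | ⟨_, h⟩)
      · exact Or.inl h
      · exact Or.inr h
    · rintro (h | h)
      · exact Or.inl ⟨hA, h⟩
      · exact Or.inr ⟨hB, h⟩
  · intro h12 hA hB
    ext d
    simp only [Set.mem_setOf_eq, Set.mem_singleton_iff]
    rw [hchar d, master σ φ D T (N₁:ℝ) (N₂:ℝ) hσ hφ hD hT hn1 hn2 h12 d]
    constructor
    · rintro (⟨_, h⟩ | ⟨hc, _⟩)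
      · exact h
      · linarith
    · intro h
      exact Or.inl ⟨hA, h⟩
  · intro h12 hA hB
    ext d
    simp only [Set.mem_setOf_eq, Set.mem_singleton_iff]
    rw [hchar d, master σ φ D T (N₁:ℝ) (N₂:ℝ) hσ hφ hD hT hn1 hn2 h12 d]
    constructor
    · rintro (⟨hc, _⟩ | ⟨_, h⟩)
      · linarith
      · exact h
    · intro h
      exact Or.inr ⟨hB, h⟩
  · intro h1 h2 h3
    ext d
    simp only [Set.mem_setOf_eq, Set.mem_empty_iff_false, iff_false]
    intro hmem
    by_cases h12 : T ≤ (N₁:ℝ) + N₂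
    · have hn2T : T < (N₂:ℝ) := by
        by_contra hc
        push_neg at hc
        by_cases hn1T : (N₁:ℝ) ≤ T
        · exact h1 ⟨h12, hc, hn1T⟩
        · exact h2 ⟨h12, hc, by linarith⟩
      have hn1T : T < (N₁:ℝ) := by
        by_contra hc
        push_neg at hc
        exact h3 ⟨h12, hn2T, hc⟩
      rw [hchar d, master σ φ D T (N₁:ℝ) (N₂:ℝ) hσ hφ hD hT hn1 hn2 h12 d] at hmem
      rcases hmem with ⟨hc, _⟩ | ⟨hc, _⟩ <;> linarith
    · push_neg at h12
      rw [hchar d] at hmem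
      exact no_roots σ φ D T (N₁:ℝ) (N₂:ℝ) hσ hφ hD hT hn1 hn2 h12 d hmem.2.2
end

section
/- Suppose N₁ ≤ T and N₁ + N₂ ≥ T. Then r₁⁺(N₂) ≤ φD/(σ√(N₁T)). -/
/-- if `N₁ ≤ T` and `N₁ + N₂ ≥ T` then `r₁⁺(N₂) ≤ φD/(σ√(N₁T))`. -/
theorem stmt_9 (σ φ D T : ℝ) (hσ : 0 < σ) (hφ : 0 < φ) (hD : 0 < D) (hT : 0 < T)
    (N₁ N₂ : ℕ) (hN₁ : 0 < N₁) (hN₂ : 0 < N₂)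
    (hN₁T : (N₁ : ℝ) ≤ T) (hsum : T ≤ (N₁ : ℝ) + N₂) :
    r₁p σ φ D T N₁ N₂ ≤ φ * D / (σ * Real.sqrt ((N₁ : ℝ) * T)) := by
  have hN1 : (0:ℝ) < N₁ := by exact_mod_cast hN₁
  have hN2 : (0:ℝ) < N₂ := by exact_mod_cast hN₂
  have ha : (0:ℝ) < (N₁:ℝ) + N₂ := by linarith
  have hNT : (0:ℝ) < (N₁:ℝ) * T := mul_pos hN1 hT
  have haT : (0:ℝ) ≤ ((N₁:ℝ) + N₂) - T := by linarith
  set u := Real.sqrt ((N₁:ℝ) * T) with hu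
  set v := Real.sqrt ((N₂:ℝ) * (((N₁:ℝ) + N₂) - T)) with hv
  have hupos : 0 < u := Real.sqrt_pos.2 hNT
  have hvnn : 0 ≤ v := Real.sqrt_nonneg _
  have hu2 : u ^ 2 = (N₁:ℝ) * T := Real.sq_sqrt hNT.le
  have hv2 : v ^ 2 = (N₂:ℝ) * (((N₁:ℝ) + N₂) - T) := Real.sq_sqrt (by positivity)
  have hX : 1 + ((N₁:ℝ) + N₂) * ((N₂:ℝ) - T) / ((N₁:ℝ) * T)
      = (N₂:ℝ) * (((N₁:ℝ) + N₂) - T) / ((N₁:ℝ) * T) := by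
    field_simp; ring
  have huv : u * v = Real.sqrt (((N₁:ℝ) * (((N₁:ℝ) + N₂) - T)) * ((N₂:ℝ) * T)) := by
    rw [hu, hv, ← Real.sqrt_mul hNT.le]; ring_nf
  have h1 : u * v ≤ ((N₁:ℝ) * (((N₁:ℝ) + N₂) - T) + (N₂:ℝ) * T) / 2 := by
    rw [huv]
    have hle : ((N₁:ℝ) * (((N₁:ℝ) + N₂) - T)) * ((N₂:ℝ) * T)
        ≤ (((N₁:ℝ) * (((N₁:ℝ) + N₂) - T) + (N₂:ℝ) * T) / 2) ^ 2 := by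
      nlinarith [sq_nonneg ((N₁:ℝ) * (((N₁:ℝ) + N₂) - T) - (N₂:ℝ) * T)]
    calc Real.sqrt (((N₁:ℝ) * (((N₁:ℝ) + N₂) - T)) * ((N₂:ℝ) * T))
        ≤ Real.sqrt ((((N₁:ℝ) * (((N₁:ℝ) + N₂) - T) + (N₂:ℝ) * T) / 2) ^ 2) :=
          Real.sqrt_le_sqrt hle
      _ = ((N₁:ℝ) * (((N₁:ℝ) + N₂) - T) + (N₂:ℝ) * T) / 2 := Real.sqrt_sq (by positivity)
  have key : u + v ≤ (N₁:ℝ) + N₂ := by nlinarith [hupos.le, hvnn, hu2, hv2, h1]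
  have hsX : Real.sqrt ((N₂:ℝ) * (((N₁:ℝ) + N₂) - T) / ((N₁:ℝ) * T)) = v / u :=
    Real.sqrt_div (by positivity) _
  unfold r₁p
  rw [hX, hsX, div_le_div_iff₀ (by positivity) (by positivity)]
  have hrw : φ * D * (1 + v / u) * (σ * u) = φ * D * σ * (u + v) := by
    field_simp
  rw [hrw]
  nlinarith [mul_le_mul_of_nonneg_left key (show (0:ℝ) ≤ φ * D * σ by positivity)]
end

section
/- Let N₂ᴬ and N₂ᴮ be positive integers with N₂ᴬ < N₂ᴮ ≤ T and N₁ + N₂ᴬ ≥ T. Then r₁⁻(N₂ᴬ) > r₁⁻(N₂ᴮ). -/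
/-- if `N₂ᴬ < N₂ᴮ ≤ T` and `N₁ + N₂ᴬ ≥ T` then `r₁⁻(N₂ᴬ) > r₁⁻(N₂ᴮ)`. -/
theorem stmt_10 (σ φ D T : ℝ) (hσ : 0 < σ) (hφ : 0 < φ) (hD : 0 < D) (hT : 0 < T)
    (N₁ N₂A N₂B : ℕ) (hN₁ : 0 < N₁) (hN₂A : 0 < N₂A) (hN₂B : 0 < N₂B)
    (hAB : N₂A < N₂B) (hBT : (N₂B : ℝ) ≤ T) (hsum : T ≤ (N₁ : ℝ) + N₂A) :
    r₁m σ φ D T N₁ N₂B < r₁m σ φ D T N₁ N₂A := by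
  have hn : (0:ℝ) < (N₁:ℝ) := by exact_mod_cast hN₁
  have ha : (0:ℝ) < (N₂A:ℝ) := by exact_mod_cast hN₂A
  have hab : ((N₂A:ℝ)) < (N₂B:ℝ) := by exact_mod_cast hAB
  have hb : (0:ℝ) < (N₂B:ℝ) := ha.trans hab
  set n : ℝ := (N₁:ℝ) with hn'
  set a : ℝ := (N₂A:ℝ) with ha'
  set b : ℝ := (N₂B:ℝ) with hb'
  have hnT : (0:ℝ) < n * T := mul_pos hn hT
  have harg : ∀ x:ℝ, 1 + (n + x) * (x - T) / (n * T) = x * (n + x - T) / (n * T) := by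
    intro x
    field_simp
    ring
  have hAa0 : 0 ≤ a * (n + a - T) / (n * T) :=
    div_nonneg (mul_nonneg ha.le (by linarith)) hnT.le
  have hlt : a * (n + a - T) / (n * T) < b * (n + b - T) / (n * T) := by
    apply div_lt_div_of_pos_right _ hnT
    nlinarith
  have hle1 : b * (n + b - T) / (n * T) ≤ 1 := by
    rw [div_le_one hnT]
    nlinarith
  unfold r₁m
  rw [harg a, harg b]
  set sa := Real.sqrt (a * (n + a - T) / (n * T)) with hsa'
  set sb := Real.sqrt (b * (n + b - T) / (n * T)) with hsb'
  have hsa0 : 0 ≤ sa := Real.sqrt_nonneg _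
  have hsalt : sa < sb := Real.sqrt_lt_sqrt hAa0 hlt
  have hsb1 : sb ≤ 1 := Real.sqrt_le_one.mpr hle1
  have hda : (0:ℝ) < σ * (n + a) := mul_pos hσ (by linarith)
  have hdb : (0:ℝ) < σ * (n + b) := mul_pos hσ (by linarith)
  calc φ * D * (1 - sb) / (σ * (n + b))
      ≤ φ * D * (1 - sb) / (σ * (n + a)) := by
        have h1 : 0 ≤ φ * D * (1 - sb) := mul_nonneg (mul_pos hφ hD).le (by linarith)
        gcongr
    _ < φ * D * (1 - sa) / (σ * (n + a)) := by
        apply div_lt_div_of_pos_right _ hda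
        nlinarith [mul_pos hφ hD]
end

section
/- Let N₂ᴬ and N₂ᴮ be positive integers with N₂ᴬ < N₂ᴮ and N₁ + N₂ᴬ ≥ T. Then r₁⁺(N₂ᴬ) ≤ r₁⁺(N₂ᴮ). -/
set_option maxHeartbeats 1000000

private lemma key_ineq (N₁ T s : ℝ) (hN : 0 < N₁) (hT : 0 < T) (h1 : N₁ ≤ s) (h2 : T ≤ s) :
    2 * Real.sqrt (N₁ * T) * Real.sqrt ((s - N₁) * (s - T)) ≤ (N₁ + T) * s - 2 * (N₁ * T) := by
  have hu := Real.sqrt_nonneg (N₁ * T)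
  have hv := Real.sqrt_nonneg ((s - N₁) * (s - T))
  have hu2 : Real.sqrt (N₁ * T) ^ 2 = N₁ * T := Real.sq_sqrt (by positivity)
  have hv2 : Real.sqrt ((s - N₁) * (s - T)) ^ 2 = (s - N₁) * (s - T) :=
    Real.sq_sqrt (by nlinarith)
  have hR : 0 ≤ (N₁ + T) * s - 2 * (N₁ * T) := by nlinarith
  nlinarith [sq_nonneg ((N₁ - T) * s),
    sq_nonneg (2 * Real.sqrt (N₁ * T) * Real.sqrt ((s - N₁) * (s - T)) - ((N₁ + T) * s - 2 * (N₁ * T))),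
    mul_nonneg hu hv]

private lemma mono_aux (N₁ T a b : ℝ) (hN : 0 < N₁) (hT : 0 < T)
    (hNa : N₁ < a) (hTa : T ≤ a) (hab : a < b) :
    (1 + Real.sqrt ((a - N₁) * (a - T) / (N₁ * T))) / a
      ≤ (1 + Real.sqrt ((b - N₁) * (b - T) / (N₁ * T))) / b := by
  have hNb : N₁ < b := lt_trans hNa hab
  have hTb : T ≤ b := le_of_lt (lt_of_le_of_lt hTa hab)
  have ha0 : 0 < a := lt_trans hN hNa
  have hb0 : 0 < b := lt_trans ha0 hab
  have hNT : (0:ℝ) < N₁ * T := by positivity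
  have hQa : 0 ≤ (a - N₁) * (a - T) := by nlinarith
  have hQb : 0 ≤ (b - N₁) * (b - T) := by nlinarith
  rw [Real.sqrt_div hQa, Real.sqrt_div hQb]
  set u := Real.sqrt (N₁ * T) with hu_def
  set va := Real.sqrt ((a - N₁) * (a - T)) with hva_def
  set vb := Real.sqrt ((b - N₁) * (b - T)) with hvb_def
  have hu0 : 0 < u := Real.sqrt_pos.mpr hNT
  have hva0 : 0 ≤ va := Real.sqrt_nonneg _
  have hvb0 : 0 ≤ vb := Real.sqrt_nonneg _
  have hu2 : u ^ 2 = N₁ * T := Real.sq_sqrt (le_of_lt hNT)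
  have hva2 : va ^ 2 = (a - N₁) * (a - T) := Real.sq_sqrt hQa
  have hvb2 : vb ^ 2 = (b - N₁) * (b - T) := Real.sq_sqrt hQb
  have hvb_pos : 0 < vb := Real.sqrt_pos.mpr (by nlinarith)
  have keyA : 2 * u * va ≤ (N₁ + T) * a - 2 * (N₁ * T) := key_ineq N₁ T a hN hT hNa.le hTa
  have keyB : 2 * u * vb ≤ (N₁ + T) * b - 2 * (N₁ * T) := key_ineq N₁ T b hN hT hNb.le hTb
  have hS : 0 < a * vb + b * va := by nlinarith
  have hK : u * (a * vb + b * va) ≤ (N₁ + T) * (a * b) - N₁ * T * (a + b) := by nlinarith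
  have hid : (a * vb - b * va) * (a * vb + b * va) =
      (b - a) * ((N₁ + T) * (a * b) - N₁ * T * (a + b)) := by
    linear_combination a ^ 2 * hvb2 - b ^ 2 * hva2
  have hmain : u * (b - a) ≤ a * vb - b * va := by
    have h3 := mul_le_mul_of_nonneg_left hK (le_of_lt (sub_pos.mpr hab))
    have h1 : (u * (b - a)) * (a * vb + b * va) ≤ (a * vb - b * va) * (a * vb + b * va) := by
      rw [hid]; nlinarith [h3]
    exact le_of_mul_le_mul_right h1 hS
  rw [div_le_div_iff₀ ha0 hb0]
  have hfin : b * (u + va) ≤ a * (u + vb) := by nlinarith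
  have e1 : (1 + va / u) * b = b * (u + va) / u := by field_simp
  have e2 : (1 + vb / u) * a = a * (u + vb) / u := by field_simp
  rw [e1, e2]
  gcongr

/-- if `N₂ᴬ < N₂ᴮ` and `N₁ + N₂ᴬ ≥ T` then `r₁⁺(N₂ᴬ) ≤ r₁⁺(N₂ᴮ)`. -/
theorem stmt_11 (σ φ D T : ℝ) (hσ : 0 < σ) (hφ : 0 < φ) (hD : 0 < D) (hT : 0 < T)
    (N₁ N₂A N₂B : ℕ) (hN₁ : 0 < N₁) (hN₂A : 0 < N₂A) (hN₂B : 0 < N₂B)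
    (hAB : N₂A < N₂B) (hsum : T ≤ (N₁ : ℝ) + N₂A) :
    r₁p σ φ D T N₁ N₂A ≤ r₁p σ φ D T N₁ N₂B := by
  have hN₁R : (0:ℝ) < N₁ := by exact_mod_cast hN₁
  have hN₂AR : (1:ℝ) ≤ N₂A := by exact_mod_cast hN₂A
  have hABR : (N₂A : ℝ) < N₂B := by exact_mod_cast hAB
  have hNT : (0:ℝ) < N₁ * T := by positivity
  have hNa : (N₁:ℝ) < (N₁:ℝ) + N₂A := by linarith
  have hab : (N₁:ℝ) + N₂A < (N₁:ℝ) + N₂B := by linarith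
  have hargA : 1 + ((N₁:ℝ) + N₂A) * ((N₂A:ℝ) - T) / (N₁ * T)
      = (((N₁:ℝ) + N₂A) - N₁) * (((N₁:ℝ) + N₂A) - T) / (N₁ * T) := by
    field_simp; ring
  have hargB : 1 + ((N₁:ℝ) + N₂B) * ((N₂B:ℝ) - T) / (N₁ * T)
      = (((N₁:ℝ) + N₂B) - N₁) * (((N₁:ℝ) + N₂B) - T) / (N₁ * T) := by
    field_simp; ring
  have h := mono_aux N₁ T ((N₁:ℝ) + N₂A) ((N₁:ℝ) + N₂B) hN₁R hT hNa hsum hab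
  unfold r₁p
  rw [hargA, hargB]
  have ha0 : (0:ℝ) < (N₁:ℝ) + N₂A := by linarith
  have hb0 : (0:ℝ) < (N₁:ℝ) + N₂B := by linarith
  calc φ * D * (1 + Real.sqrt ((((N₁:ℝ) + N₂A) - N₁) * (((N₁:ℝ) + N₂A) - T) / (N₁ * T))) / (σ * ((N₁:ℝ) + N₂A))
      = (φ * D / σ) * ((1 + Real.sqrt ((((N₁:ℝ) + N₂A) - N₁) * (((N₁:ℝ) + N₂A) - T) / (N₁ * T))) / ((N₁:ℝ) + N₂A)) := by
        field_simp
    _ ≤ (φ * D / σ) * ((1 + Real.sqrt ((((N₁:ℝ) + N₂B) - N₁) * (((N₁:ℝ) + N₂B) - T) / (N₁ * T))) / ((N₁:ℝ) + N₂B)) := by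
        apply mul_le_mul_of_nonneg_left h (by positivity)
    _ = φ * D * (1 + Real.sqrt ((((N₁:ℝ) + N₂B) - N₁) * (((N₁:ℝ) + N₂B) - T) / (N₁ * T))) / (σ * ((N₁:ℝ) + N₂B)) := by
        field_simp
end

section
/- Fix a positive integer N₁ and let ρ > 0. The function ρ' ↦ g(0,0,N₁;ρ') is differentiable at ρ, and its derivative at ρ is nonpositive if and only if N₁ ≤ T. -/
set_option maxHeartbeats 800000 in
/-- `ρ' ↦ g(0,0,N₁;ρ')` is differentiable at any `ρ > 0`, and its derivative
there is nonpositive iff `N₁ ≤ T`. -/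
theorem stmt_13 (σ φ D T : ℝ) (hσ : 0 < σ) (hφ : 0 < φ) (hD : 0 < D) (hT : 0 < T)
    (N₁ : ℕ) (hN₁ : 0 < N₁) (ρ : ℝ) (hρ : 0 < ρ) :
    DifferentiableAt ℝ (fun ρ' => g σ φ D T ρ' 0 N₁ 0) ρ ∧
    (deriv (fun ρ' => g σ φ D T ρ' 0 N₁ 0) ρ ≤ 0 ↔ (N₁ : ℝ) ≤ T) := by
  set A : ℝ := 4 * φ * D / N₁ with hA
  set Bc : ℝ := 4 * (φ * D) ^ 2 / (N₁ * T) with hBc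
  have hN : (0:ℝ) < N₁ := Nat.cast_pos.mpr hN₁
  have hApos : 0 < A := by positivity
  have hBpos : 0 < Bc := by positivity
  have harg : ∀ x : ℝ, 1 + 4 * x / (N₁:ℝ) * B σ φ D T x 0 0 = 1 + A * x + Bc * x ^ 2 := by
    intro x
    simp only [B]
    rw [hA, hBc]
    field_simp
    ring
  have hfun : (fun ρ' => g σ φ D T ρ' 0 N₁ 0)
      = fun x => (-1 + Real.sqrt (1 + A * x + Bc * x ^ 2)) / (2 * σ * x) := by
    funext x
    simp only [g]
    rw [harg x]
  rw [hfun]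
  have hU : HasDerivAt (fun x : ℝ => 1 + A * x + Bc * x ^ 2) (A + 2 * Bc * ρ) ρ := by
    have h := (((hasDerivAt_id ρ).const_mul A).add ((hasDerivAt_pow 2 ρ).const_mul Bc)).const_add 1
    have he : (fun x : ℝ => 1 + A * x + Bc * x ^ 2) = fun x => 1 + (A * id x + Bc * x ^ 2) := by
      funext x; simp [id]; ring
    rw [he]
    rw [show A + 2 * Bc * ρ = A * 1 + Bc * (↑2 * ρ ^ (2 - 1)) by norm_num; ring]
    exact h
  set u : ℝ := 1 + A * ρ + Bc * ρ ^ 2 with hu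
  have hupos : 0 < u := by positivity
  set s : ℝ := Real.sqrt u with hsdef
  have hspos : 0 < s := Real.sqrt_pos.mpr hupos
  have hs2 : s ^ 2 = u := Real.sq_sqrt hupos.le
  have hsqrt : HasDerivAt (fun x : ℝ => Real.sqrt (1 + A * x + Bc * x ^ 2))
      (1 / (2 * s) * (A + 2 * Bc * ρ)) ρ :=
    (Real.hasDerivAt_sqrt hupos.ne').comp ρ hU
  have hnum : HasDerivAt (fun x : ℝ => -1 + Real.sqrt (1 + A * x + Bc * x ^ 2))
      (1 / (2 * s) * (A + 2 * Bc * ρ)) ρ := hsqrt.const_add (-1)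
  have hden : HasDerivAt (fun x : ℝ => 2 * σ * x) (2 * σ) ρ := by
    simpa using (hasDerivAt_id ρ).const_mul (2 * σ)
  have hdne : 2 * σ * ρ ≠ 0 := by positivity
  have hder : HasDerivAt (fun x => (-1 + Real.sqrt (1 + A * x + Bc * x ^ 2)) / (2 * σ * x))
      ((1 / (2 * s) * (A + 2 * Bc * ρ) * (2 * σ * ρ) - (-1 + s) * (2 * σ)) / (2 * σ * ρ) ^ 2)
      ρ := hnum.div hden hdne
  refine ⟨hder.differentiableAt, ?_⟩
  rw [hder.deriv]
  have hdenpos : 0 < s * (2 * σ * ρ) ^ 2 := by positivity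
  have hkey : (1 / (2 * s) * (A + 2 * Bc * ρ) * (2 * σ * ρ) - (-1 + s) * (2 * σ)) / (2 * σ * ρ) ^ 2
      = σ * (2 * s - 2 - A * ρ) / (s * (2 * σ * ρ) ^ 2) := by
    field_simp
    linear_combination (-2) * hs2 - 2 * hu
  rw [hkey]
  have hmain : σ * (2 * s - 2 - A * ρ) / (s * (2 * σ * ρ) ^ 2) ≤ 0 ↔ 2 * s ≤ 2 + A * ρ := by
    rw [div_nonpos_iff]
    constructor
    · rintro (⟨h1, h2⟩ | ⟨h1, h2⟩)
      · linarith
      · nlinarith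
    · intro h
      exact Or.inr ⟨by nlinarith, hdenpos.le⟩
  rw [hmain]
  constructor
  · intro h
    have hsq : 4 * u ≤ (2 + A * ρ) ^ 2 := by
      nlinarith [mul_nonneg (sub_nonneg.mpr h) (by positivity : (0:ℝ) ≤ 2 + A * ρ + 2 * s)]
    have h4 : 4 * Bc ≤ A ^ 2 := by
      have hρ2 : 0 < ρ ^ 2 := by positivity
      nlinarith [hsq]
    have hc : 0 < (φ * D) ^ 2 := by positivity
    rw [hA, hBc, div_pow, ← mul_div_assoc,
      div_le_div_iff₀ (by positivity) (by positivity)] at h4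
    nlinarith [h4, mul_pos hN hc, hc, hN]
  · intro h
    have h4 : 4 * Bc ≤ A ^ 2 := by
      rw [hA, hBc, div_pow, ← mul_div_assoc,
        div_le_div_iff₀ (by positivity) (by positivity)]
      nlinarith [mul_pos hN (mul_pos (mul_pos hφ hD) (mul_pos hφ hD)), mul_pos hφ hD]
    have hsq : 4 * u ≤ (2 + A * ρ) ^ 2 := by nlinarith [sq_nonneg ρ]
    nlinarith [hs2, hspos, mul_pos (mul_pos hApos hρ) hspos]
end

section
/- Fix ρ > 0 and d₁ ∈ [0, g(0,0,N₁;ρ)] with σN₁d₁ ≤ φD. Then the derivative of ρ' ↦ g(d₁,N₁,N₂;ρ') at ρ is nonnegative if and only if −σ²N₁(N₁+N₂)d₁² + 2φDN₁σd₁ + (N₂/T − 1)φ²D² ≥ 0; in particular, this sign condition does not depend on ρ. -/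
set_option maxHeartbeats 1000000

/-- the derivative of `ρ' ↦ g(d₁,N₁,N₂;ρ')` at `ρ` is nonnegative iff
`−σ²N₁(N₁+N₂)d₁² + 2φDN₁σd₁ + (N₂/T − 1)φ²D² ≥ 0`, a condition independent of `ρ`. -/
theorem stmt_16 (σ φ D T : ℝ) (hσ : 0 < σ) (hφ : 0 < φ) (hD : 0 < D) (hT : 0 < T)
    (N₁ N₂ : ℕ) (hN₁ : 0 < N₁) (hN₂ : 0 < N₂)
    (ρ : ℝ) (hρ : 0 < ρ)
    (d₁ : ℝ) (hd₁ : d₁ ∈ Set.Icc 0 (g σ φ D T ρ 0 N₁ 0))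
    (hdose : σ * N₁ * d₁ ≤ φ * D) :
    0 ≤ deriv (fun ρ' => g σ φ D T ρ' N₁ N₂ d₁) ρ ↔
      0 ≤ -σ ^ 2 * N₁ * ((N₁ : ℝ) + N₂) * d₁ ^ 2 + 2 * φ * D * N₁ * σ * d₁ +
        ((N₂ : ℝ) / T - 1) * φ ^ 2 * D ^ 2 := by
  obtain ⟨hd0, hdle⟩ := hd₁
  have hT' : T ≠ 0 := ne_of_gt hT
  have hN₂pos : (0:ℝ) < (N₂:ℝ) := by exact_mod_cast hN₂
  have hN₁pos : (0:ℝ) < (N₁:ℝ) := by exact_mod_cast hN₁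
  have hN₂' : (N₂:ℝ) ≠ 0 := ne_of_gt hN₂pos
  -- abbreviations
  set a : ℝ := φ * D - σ * N₁ * d₁ with ha_def
  set c : ℝ := φ ^ 2 * D ^ 2 / T - σ ^ 2 * N₁ * d₁ ^ 2 with hc_def
  have ha : 0 ≤ a := by rw [ha_def]; linarith
  have hBlin : ∀ x : ℝ, B σ φ D T x N₁ d₁ = a + c * x := by
    intro x; rw [B, ha_def, hc_def]; field_simp; ring
  -- show B at ρ is nonneg, i.e. 0 ≤ a + c * ρ
  have hC : (0:ℝ) < φ * D * (1 + ρ * φ * D / T) := by positivity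
  have hvnn : (0:ℝ) ≤ 1 + 4 * ρ / (N₁:ℝ) * (φ * D * (1 + ρ * φ * D / T)) := by positivity
  set v : ℝ := Real.sqrt (1 + 4 * ρ / (N₁:ℝ) * (φ * D * (1 + ρ * φ * D / T))) with hv_def
  have hv2 : v ^ 2 = 1 + 4 * ρ / (N₁:ℝ) * (φ * D * (1 + ρ * φ * D / T)) :=
    Real.sq_sqrt hvnn
  have hdle' : d₁ ≤ (-1 + v) / (2 * σ * ρ) := by
    have : g σ φ D T ρ 0 N₁ 0 = (-1 + v) / (2 * σ * ρ) := by
      rw [g, hv_def, B]; norm_num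
    linarith [hdle, this ▸ hdle]
  have hd2 : 2 * σ * ρ * d₁ + 1 ≤ v := by
    have h := (le_div_iff₀ (by positivity : (0:ℝ) < 2 * σ * ρ)).mp hdle'
    linarith
  have hB : 0 ≤ a + c * ρ := by
    have hsq := mul_self_le_mul_self (by positivity : (0:ℝ) ≤ 2 * σ * ρ * d₁ + 1) hd2
    have hv2' : (N₁:ℝ) * v ^ 2 = (N₁:ℝ) + 4 * ρ * (φ * D * (1 + ρ * φ * D / T)) := by
      rw [hv2]; field_simp
    rw [ha_def, hc_def]
    have expand : a + c * ρ = φ * D * (1 + ρ * φ * D / T) - σ * N₁ * d₁ - ρ * σ ^ 2 * N₁ * d₁ ^ 2 := by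
      rw [ha_def, hc_def]; field_simp; ring
    nlinarith [hsq, hv2', hρ, hσ, hN₁pos, mul_pos hρ (mul_pos hσ hσ)]
  clear_value v
  clear hd2 hdle' hv2 hv_def hvnn hC hdle v
  clear_value a c
  -- rewrite the function in polynomial-under-sqrt form
  have hfun : (fun ρ' => g σ φ D T ρ' ↑N₁ ↑N₂ d₁) =
      fun x => (-1 + Real.sqrt (4 * c / (N₂:ℝ) * x ^ 2 + (4 * a / (N₂:ℝ) * x + 1))) /
        (2 * σ * x) := by
    funext x
    rw [g, hBlin x]
    rw [show 1 + 4 * x / (N₂:ℝ) * (a + c * x)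
        = 4 * c / (N₂:ℝ) * x ^ 2 + (4 * a / (N₂:ℝ) * x + 1) from by field_simp; ring]
  set q : ℝ := 4 * c / (N₂:ℝ) * ρ ^ 2 + (4 * a / (N₂:ℝ) * ρ + 1) with hq_def
  have hq1 : 1 ≤ q := by
    have key : 0 ≤ 4 * ρ / (N₂:ℝ) * (a + c * ρ) :=
      mul_nonneg (le_of_lt (show (0:ℝ) < 4 * ρ / (N₂:ℝ) by positivity)) hB
    have key2 : 4 * ρ / (N₂:ℝ) * (a + c * ρ) = 4 * c / (N₂:ℝ) * ρ ^ 2 + 4 * a / (N₂:ℝ) * ρ := by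
      ring
    rw [hq_def]; linarith [key2 ▸ key]
  have hqpos : (0:ℝ) < q := lt_of_lt_of_le one_pos hq1
  -- derivative of the inner polynomial
  have hx2 : HasDerivAt (fun x : ℝ => x ^ 2) (2 * ρ) ρ := by
    simpa using hasDerivAt_pow 2 ρ
  have h1 : HasDerivAt (fun x : ℝ => 4 * c / (N₂:ℝ) * x ^ 2 + (4 * a / (N₂:ℝ) * x + 1))
      (4 * c / (N₂:ℝ) * (2 * ρ) + 4 * a / (N₂:ℝ)) ρ := by
    have := (hx2.const_mul (4 * c / (N₂:ℝ))).add
      (((hasDerivAt_id ρ).const_mul (4 * a / (N₂:ℝ))).add_const 1)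
    simp only [mul_one] at this; exact this
  have hsqrt : HasDerivAt Real.sqrt (1 / (2 * Real.sqrt q)) q :=
    Real.hasDerivAt_sqrt (ne_of_gt hqpos)
  have h2 := hsqrt.comp ρ h1
  simp only [Function.comp_def] at h2
  have h3 := h2.const_add (-1)
  have h4 : HasDerivAt (fun x : ℝ => 2 * σ * x) (2 * σ) ρ := by
    simpa using (hasDerivAt_id ρ).const_mul (2 * σ)
  have h5 := h3.fun_div h4 (ne_of_gt (show (0:ℝ) < 2 * σ * ρ by positivity))
  rw [hfun, h5.deriv, ← hq_def]
  clear_value q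
  set u : ℝ := Real.sqrt q with hu_def
  have hu2 : u ^ 2 = q := by rw [hu_def]; exact Real.sq_sqrt (le_of_lt hqpos)
  have hunn : (0:ℝ) ≤ u := by rw [hu_def]; exact Real.sqrt_nonneg q
  have hu2' : (N₂:ℝ) * u ^ 2 = 4 * c * ρ ^ 2 + 4 * a * ρ + (N₂:ℝ) := by
    rw [hu2, hq_def]; field_simp; ring
  clear_value u
  clear hsqrt h1 h2 h3 h4 hx2 hfun hBlin hq_def hu_def
  have hu1 : 1 ≤ u := by nlinarith [hunn, hu2, hq1]
  have hu0 : (0:ℝ) < u := lt_of_lt_of_le one_pos hu1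
  have hu2'' : (N₂:ℝ) ^ 2 * u ^ 2 = (N₂:ℝ) * (4 * c * ρ ^ 2 + 4 * a * ρ + (N₂:ℝ)) := by
    linear_combination (N₂:ℝ) * hu2'
  have hE : (1 / (2 * u) * (4 * c / (N₂:ℝ) * (2 * ρ) + 4 * a / (N₂:ℝ)) * (2 * σ * ρ) -
        (-1 + u) * (2 * σ)) / (2 * σ * ρ) ^ 2
      = ((N₂:ℝ) * u - (N₂:ℝ) - 2 * a * ρ) / (2 * σ * ρ ^ 2 * (N₂:ℝ) * u) := by
    rw [div_eq_div_iff (by positivity) (by positivity)]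
    field_simp
    linear_combination (-2) * hu2'
  rw [hE, le_div_iff₀ (by positivity : (0:ℝ) < 2 * σ * ρ ^ 2 * (N₂:ℝ) * u), zero_mul]
  have hRHS : -σ ^ 2 * (N₁:ℝ) * ((N₁:ℝ) + (N₂:ℝ)) * d₁ ^ 2 + 2 * φ * D * (N₁:ℝ) * σ * d₁ +
      ((N₂:ℝ) / T - 1) * φ ^ 2 * D ^ 2 = (N₂:ℝ) * c - a ^ 2 := by
    rw [ha_def, hc_def]; field_simp; ring
  rw [hRHS]
  constructor
  · intro h
    have h' : (N₂:ℝ) + 2 * a * ρ ≤ (N₂:ℝ) * u := by linarith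
    have hsq := mul_self_le_mul_self (by positivity : (0:ℝ) ≤ (N₂:ℝ) + 2 * a * ρ) h'
    nlinarith [hsq, hu2'', mul_pos hρ hρ, hN₂pos]
  · intro h
    have hca : 4 * a ^ 2 * ρ ^ 2 ≤ 4 * (N₂:ℝ) * c * ρ ^ 2 := by
      nlinarith [mul_nonneg (sub_nonneg.mpr h) (sq_nonneg ρ)]
    have hpos2 : (0:ℝ) < (N₂:ℝ) * u + (N₂:ℝ) + 2 * a * ρ := by positivity
    nlinarith [hu2'', hca, hpos2]
end

section
/- Suppose N₁ + N₂ < T. Then for every ρ > 0 and every d₁ ∈ [0, g(0,0,N₁;ρ)], the derivative of ρ' ↦ g(d₁,N₁,N₂;ρ') at ρ is strictly negative. -/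
set_option maxHeartbeats 1000000

/-- Auxiliary: positivity of the discriminant-type quadratic. -/
lemma aux_key (T n₁ n₂ P x : ℝ) (hT : 0 < T) (hn₁ : 0 < n₁) (hn₂ : 0 < n₂)
    (hsum : n₁ + n₂ < T) (hP : 0 < P) (hx : 0 ≤ x) :
    n₂ * (P^2 - T*n₁*x^2) < T * (P - n₁*x)^2 := by
  nlinarith [mul_nonneg hT.le (sq_nonneg (n₁*(n₁+n₂)*x - n₁*P)),
    mul_pos (mul_pos (mul_pos hn₁ hn₂) (mul_pos hP hP)) (by linarith : (0:ℝ) < T - (n₁+n₂)),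
    mul_pos hn₁ (by linarith : (0:ℝ) < n₁+n₂), sq_nonneg x, mul_pos hn₁ hT]

/-- Auxiliary: nonnegativity of `P - n₁ x` under the budget constraint. -/
lemma aux_A (T ρ P n₁ x : ℝ) (hT : 0 < T) (hρ : 0 < ρ) (hP : 0 < P) (hn₁ : 0 < n₁)
    (hx : 0 ≤ x) (hN1T : n₁ < T)
    (hB : 0 ≤ T*(P - n₁*x) + (P^2 - T*n₁*x^2)*ρ) :
    0 ≤ P - n₁*x := by
  by_contra hcon
  push_neg at hcon
  have hx' : 0 < x := by nlinarith
  have e1 : T*P < T*(n₁*x) := by nlinarith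
  have e2 : ρ*T*P*x < ρ*x*(T*(n₁*x)) := by nlinarith [mul_pos (mul_pos hρ hT) hx']
  have e3 : ρ*T*P*x < ρ*P^2 := by nlinarith
  have e5 : P < T*x := by nlinarith [mul_pos hn₁ hx']
  nlinarith [mul_pos hρ hP]

/-- Auxiliary: from the quadratic bound on `d₁` we get `B(d₁,N₁;ρ) ≥ 0` (cleared by `T`). -/
lemma aux_Bnn (T ρ P n₁ x c : ℝ) (hT : 0 < T) (hρ : 0 < ρ) (hn₁ : 0 < n₁)
    (h4 : 0 ≤ n₁*T*(c - (1 + 2*ρ*x)^2))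
    (hcmul : n₁*T*(c-1) = 4*ρ*(P*T + ρ*P^2)) :
    0 ≤ T*(P - n₁*x) + (P^2 - T*n₁*x^2)*ρ := by
  nlinarith [h4, hcmul, hρ]

/-- Auxiliary: cleared form of `q < y²`. -/
lemma aux_sqlt (ρ n T α β : ℝ) (hρ : 0 < ρ) (hn : 0 < n) (hT : 0 < T)
    (hkey : n*β < T*α^2) :
    (n*T + 4*ρ*(T*α + β*ρ))*n^2 < (n + 2*ρ*α)^2*(n*T) := by
  nlinarith [mul_pos (mul_pos (mul_pos hρ hρ) hn) (sub_pos.mpr hkey)]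

/-- Auxiliary: the final sign computation for the derivative numerator. -/
lemma aux_final (σ ρ T n s α β : ℝ) (hσ : 0 < σ) (hρ : 0 < ρ) (hT : 0 < T) (hn : 0 < n)
    (hs1 : 1 ≤ s) (hsq : s^2*(n*T) = n*T + 4*ρ*(T*α + β*ρ))
    (hsn : s*n < n + 2*ρ*α) :
    (4*(T*α) + 8*β*ρ)*(2*σ*ρ) < (-1+s)*(2*σ)*(2*s)*(n*T) := by
  have hsq2 : 4*σ*(s^2*(n*T)) = 4*σ*(n*T + 4*ρ*(T*α + β*ρ)) := by rw [hsq]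
  nlinarith [hsq2, mul_lt_mul_of_pos_left hsn (by positivity : (0:ℝ) < 4*σ*T)]

/-- if `N₁ + N₂ < T` then for every `ρ > 0` and every
`d₁ ∈ [0, g(0,0,N₁;ρ)]` the derivative of `ρ' ↦ g(d₁,N₁,N₂;ρ')` at `ρ` is negative. -/
theorem stmt_17 (σ φ D T : ℝ) (hσ : 0 < σ) (hφ : 0 < φ) (hD : 0 < D) (hT : 0 < T)
    (N₁ N₂ : ℕ) (hN₁ : 0 < N₁) (hN₂ : 0 < N₂)
    (hsum : (N₁ : ℝ) + N₂ < T) :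
    ∀ ρ : ℝ, 0 < ρ → ∀ d₁ ∈ Set.Icc 0 (g σ φ D T ρ 0 N₁ 0),
      deriv (fun ρ' => g σ φ D T ρ' N₁ N₂ d₁) ρ < 0 := by
  intro ρ hρ d₁ hd₁
  obtain ⟨hd0, hdle⟩ := hd₁
  have hn : (0:ℝ) < (N₂:ℝ) := by exact_mod_cast hN₂
  have hN1 : (0:ℝ) < (N₁:ℝ) := by exact_mod_cast hN₁
  have hP : (0:ℝ) < φ * D := mul_pos hφ hD
  have hN1T : (N₁:ℝ) < T := by linarith
  -- Part 1 : B(d₁,N₁;ρ) ≥ 0 (cleared of denominators by multiplying by T)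
  set c : ℝ := 1 + 4*ρ/(N₁:ℝ) * (φ*D*(1+ρ*φ*D/T)) with hcdef
  have hgval : g σ φ D T ρ 0 (N₁:ℝ) 0 = (-1 + Real.sqrt c) / (2*σ*ρ) := by
    unfold g
    rw [show B σ φ D T ρ 0 0 = φ*D*(1+ρ*φ*D/T) by simp [B]]
  have hcpos : (0:ℝ) ≤ c := by rw [hcdef]; positivity
  set s₀ : ℝ := Real.sqrt c with hs₀def
  have hs₀sq : s₀^2 = c := Real.sq_sqrt hcpos
  have hs₀nn : (0:ℝ) ≤ s₀ := Real.sqrt_nonneg c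
  have hw : d₁ * (2*σ*ρ) ≤ -1 + s₀ := by
    rw [hgval] at hdle
    exact (le_div_iff₀ (by positivity)).mp hdle
  have hcmul : (N₁:ℝ)*T*(c-1) = 4*ρ*(φ*D*T + ρ*(φ*D)^2) := by
    rw [hcdef]; field_simp; ring
  have h1 : (0:ℝ) ≤ s₀ - 1 - 2*σ*ρ*d₁ := by linarith [hw]
  have h2a : (0:ℝ) ≤ 2*σ*ρ*d₁ :=
    mul_nonneg (mul_nonneg (by linarith) hρ.le) hd0
  have h2 : (0:ℝ) ≤ s₀ + 1 + 2*σ*ρ*d₁ := by linarith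
  have h3 : (0:ℝ) ≤ c - (1 + 2*ρ*(σ*d₁))^2 := by
    nlinarith [mul_nonneg h1 h2, hs₀sq]
  have h4 : (0:ℝ) ≤ (N₁:ℝ)*T*(c - (1 + 2*ρ*(σ*d₁))^2) := mul_nonneg (by positivity) h3
  have hBnn0 : (0:ℝ) ≤ T*(φ*D - (N₁:ℝ)*(σ*d₁)) + ((φ*D)^2 - T*(N₁:ℝ)*(σ*d₁)^2)*ρ :=
    aux_Bnn T ρ (φ*D) (N₁:ℝ) (σ*d₁) c hT hρ hN1 h4 hcmul
  have hBnn : (0:ℝ) ≤ T*(φ*D - σ*(N₁:ℝ)*d₁) + ((φ*D)^2 - T*σ^2*(N₁:ℝ)*d₁^2)*ρ := by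
    nlinarith [hBnn0]
  have hxnn : (0:ℝ) ≤ σ*d₁ := mul_nonneg hσ.le hd0
  have hA0 : (0:ℝ) ≤ φ*D - (N₁:ℝ)*(σ*d₁) :=
    aux_A T ρ (φ*D) (N₁:ℝ) (σ*d₁) hT hρ hP hN1 hxnn hN1T hBnn0
  have hA : (0:ℝ) ≤ φ*D - σ*(N₁:ℝ)*d₁ := by nlinarith [hA0]
  -- key discriminant inequality
  have hkey0 := aux_key T (N₁:ℝ) (N₂:ℝ) (φ*D) (σ*d₁) hT hN1 hn hsum hP hxnn
  have hkeyT : (N₂:ℝ)*((φ*D)^2 - T*σ^2*(N₁:ℝ)*d₁^2) < T*(φ*D - σ*(N₁:ℝ)*d₁)^2 := by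
    nlinarith [hkey0]
  -- the function rewritten with a single division
  have hq1 : (1:ℝ) ≤ ((N₂:ℝ)*T + 4*ρ*(T*(φ*D - σ*(N₁:ℝ)*d₁) + ((φ*D)^2 - T*σ^2*(N₁:ℝ)*d₁^2)*ρ))/((N₂:ℝ)*T) := by
    rw [le_div_iff₀ (by positivity)]
    nlinarith [mul_nonneg hρ.le hBnn]
  set q : ℝ := ((N₂:ℝ)*T + 4*ρ*(T*(φ*D - σ*(N₁:ℝ)*d₁) + ((φ*D)^2 - T*σ^2*(N₁:ℝ)*d₁^2)*ρ))/((N₂:ℝ)*T) with hqdef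
  have hqpos : (0:ℝ) < q := by linarith
  have hq0 : q ≠ 0 := ne_of_gt hqpos
  set s : ℝ := Real.sqrt q with hsdef
  have hssq : s^2 = q := Real.sq_sqrt hqpos.le
  have hs1 : (1:ℝ) ≤ s := by
    have h := Real.sqrt_le_sqrt hq1
    rw [Real.sqrt_one] at h
    exact h
  have hspos : (0:ℝ) < s := by linarith
  -- s·N₂ < N₂ + 2ρ(φD − σN₁d₁)
  have hsn : s * (N₂:ℝ) < (N₂:ℝ) + 2*ρ*(φ*D - σ*(N₁:ℝ)*d₁) := by
    have hynum : (0:ℝ) < (N₂:ℝ) + 2*ρ*(φ*D - σ*(N₁:ℝ)*d₁) := by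
      nlinarith [mul_nonneg hρ.le hA]
    have hy : (0:ℝ) < ((N₂:ℝ) + 2*ρ*(φ*D - σ*(N₁:ℝ)*d₁))/(N₂:ℝ) := div_pos hynum hn
    have h5 : s < ((N₂:ℝ) + 2*ρ*(φ*D - σ*(N₁:ℝ)*d₁))/(N₂:ℝ) := by
      rw [hsdef, Real.sqrt_lt' hy, hqdef, div_pow, div_lt_div_iff₀ (by positivity) (by positivity)]
      linarith [aux_sqlt ρ (N₂:ℝ) T (φ*D - σ*(N₁:ℝ)*d₁) ((φ*D)^2 - T*σ^2*(N₁:ℝ)*d₁^2) hρ hn hT hkeyT]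
    exact (lt_div_iff₀ hn).mp h5
  have hsqnT : s^2*((N₂:ℝ)*T) = (N₂:ℝ)*T + 4*ρ*(T*(φ*D - σ*(N₁:ℝ)*d₁) + ((φ*D)^2 - T*σ^2*(N₁:ℝ)*d₁^2)*ρ) := by
    rw [hssq, hqdef]
    field_simp
  -- derivative computation
  have hpoly : HasDerivAt (fun x : ℝ => ((N₂:ℝ)*T + 4*x*(T*(φ*D - σ*(N₁:ℝ)*d₁) + ((φ*D)^2 - T*σ^2*(N₁:ℝ)*d₁^2)*x))/((N₂:ℝ)*T))
      ((4*(T*(φ*D - σ*(N₁:ℝ)*d₁)) + 8*((φ*D)^2 - T*σ^2*(N₁:ℝ)*d₁^2)*ρ)/((N₂:ℝ)*T)) ρ := by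
    apply HasDerivAt.div_const
    have h6 : HasDerivAt (fun x : ℝ => x^2) (2*ρ) ρ := by
      simpa using hasDerivAt_pow 2 ρ
    have h7 : HasDerivAt (fun x : ℝ => (N₂:ℝ)*T + (4*(T*(φ*D - σ*(N₁:ℝ)*d₁))*x + 4*((φ*D)^2 - T*σ^2*(N₁:ℝ)*d₁^2)*x^2))
        (4*(T*(φ*D - σ*(N₁:ℝ)*d₁)) + 8*((φ*D)^2 - T*σ^2*(N₁:ℝ)*d₁^2)*ρ) ρ := by
      have h8 := (((hasDerivAt_id ρ).const_mul (4*(T*(φ*D - σ*(N₁:ℝ)*d₁)))).add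
        (h6.const_mul (4*((φ*D)^2 - T*σ^2*(N₁:ℝ)*d₁^2)))).const_add ((N₂:ℝ)*T)
      exact h8.congr_deriv (by ring)
    have hfun : (fun x : ℝ => (N₂:ℝ)*T + 4*x*(T*(φ*D - σ*(N₁:ℝ)*d₁) + ((φ*D)^2 - T*σ^2*(N₁:ℝ)*d₁^2)*x))
        = (fun x : ℝ => (N₂:ℝ)*T + (4*(T*(φ*D - σ*(N₁:ℝ)*d₁))*x + 4*((φ*D)^2 - T*σ^2*(N₁:ℝ)*d₁^2)*x^2)) := by
      funext x; ring
    rw [hfun]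
    exact h7
  have hfρ : ((N₂:ℝ)*T + 4*ρ*(T*(φ*D - σ*(N₁:ℝ)*d₁) + ((φ*D)^2 - T*σ^2*(N₁:ℝ)*d₁^2)*ρ))/((N₂:ℝ)*T) ≠ 0 := by
    rw [← hqdef]; exact hq0
  have hsqrtD := hpoly.sqrt hfρ
  have hnum := hsqrtD.const_add (-1)
  have hden : HasDerivAt (fun x : ℝ => 2*σ*x) (2*σ) ρ := by
    simpa using (hasDerivAt_id ρ).const_mul (2*σ)
  have hne : (2*σ*ρ) ≠ 0 := by positivity
  have hdiv := hnum.div hden hne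
  have hfeq : (fun ρ' => g σ φ D T ρ' (N₁:ℝ) (N₂:ℝ) d₁)
      = (fun x : ℝ => (-1 + Real.sqrt (((N₂:ℝ)*T + 4*x*(T*(φ*D - σ*(N₁:ℝ)*d₁) + ((φ*D)^2 - T*σ^2*(N₁:ℝ)*d₁^2)*x))/((N₂:ℝ)*T))) / (2*σ*x)) := by
    funext x
    unfold g
    have harg : 1 + 4*x/(N₂:ℝ) * B σ φ D T x (N₁:ℝ) d₁
        = ((N₂:ℝ)*T + 4*x*(T*(φ*D - σ*(N₁:ℝ)*d₁) + ((φ*D)^2 - T*σ^2*(N₁:ℝ)*d₁^2)*x))/((N₂:ℝ)*T) := by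
      unfold B
      field_simp [hn.ne', hT.ne']
      ring_nf
    rw [harg]
  erw [hfeq, hdiv.deriv]
  rw [← hqdef, ← hsdef]
  apply div_neg_of_neg_of_pos _ (by positivity)
  rw [sub_neg, div_mul_eq_mul_div, div_lt_iff₀ (by linarith : (0:ℝ) < 2*s),
    div_mul_eq_mul_div, div_lt_iff₀ (by positivity : (0:ℝ) < (N₂:ℝ)*T)]
  linarith [aux_final σ ρ T (N₂:ℝ) s (φ*D - σ*(N₁:ℝ)*d₁) ((φ*D)^2 - T*σ^2*(N₁:ℝ)*d₁^2)
    hσ hρ hT hn hs1 hsqnT hsn]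
end
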